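/- arXiv:2005.02112 — 4 statements merged into one kernel-verified Lean document; each statement's English description precedes it below -/
import Mathlib

section
/- For any invertible real n×n matrix g and any symmetric positive definite matrices p, q and t ∈ [0,1], the congruence action commutes with the geodesic: g (p #_t q) gᵀ = (g p gᵀ) #_t (g q gᵀ), where p #_t q = p^{1/2}(p^{-1/2} q p^{-1/2})^t p^{1/2}. -/
open Matrix

noncomputable section

variable {n : ℕ}

/-- The `t`-th power of a symmetric matrix, defined via the spectral decomposition
(junk value if the matrix is not symmetric). -/
noncomputable def mpow (A : Matrix (Fin n) (Fin n) ℝ) (t : ℝ) : Matrix (Fin n) (Fin n) ℝ :=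
  if h : A.IsHermitian then
    (h.eigenvectorUnitary : Matrix (Fin n) (Fin n) ℝ) *
      Matrix.diagonal (fun i => (h.eigenvalues i) ^ t) *
      (star (h.eigenvectorUnitary : Matrix (Fin n) (Fin n) ℝ))
  else A

/-- Eigenvalues of a symmetric matrix, listed in nonincreasing order
(junk value `0` if the matrix is not symmetric). -/
noncomputable def eigsDesc (A : Matrix (Fin n) (Fin n) ℝ) : Fin n → ℝ :=
  if h : A.IsHermitian then fun i => h.eigenvalues (Tuple.sort h.eigenvalues i.rev) else 0

/-- Singular values of a square real matrix, in nonincreasing order. -/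
noncomputable def svals (g : Matrix (Fin n) (Fin n) ℝ) : Fin n → ℝ :=
  fun i => Real.sqrt (eigsDesc (gᵀ * g) i)

/-- The vector `σ⃗(g)` of base-2 logarithms of the singular values of `g`,
in nonincreasing order. -/
noncomputable def sigmaVec (g : Matrix (Fin n) (Fin n) ℝ) : Fin n → ℝ :=
  fun i => Real.logb 2 (svals g i)

/-- The vectorial distance `d⃗(p,q) = 2 σ⃗(p^{-1/2} q^{1/2})`. -/
noncomputable def vecd (p q : Matrix (Fin n) (Fin n) ℝ) : Fin n → ℝ :=
  fun i => 2 * sigmaVec (mpow p (-(1/2)) * mpow q (1/2)) i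

/-- Partial sum of the first `k` components of a vector in `ℝⁿ`. -/
noncomputable def psum (ξ : Fin n → ℝ) (k : ℕ) : ℝ :=
  ∑ i ∈ Finset.univ.filter (fun i : Fin n => (i : ℕ) < k), ξ i

/-- The majorization-type partial order `⪯` on `ℝⁿ`: all partial sums are compared,
with equality of the total sums. -/
def maj (ξ η : Fin n → ℝ) : Prop :=
  (∀ k : ℕ, k < n → psum ξ k ≤ psum η k) ∧ psum ξ n = psum η n

/-- The geodesic `p #_t q = p^{1/2} (p^{-1/2} q p^{-1/2})^t p^{1/2}` in the trace metric
on positive definite matrices. -/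
noncomputable def geo (p q : Matrix (Fin n) (Fin n) ℝ) (t : ℝ) : Matrix (Fin n) (Fin n) ℝ :=
  mpow p (1/2) * mpow (mpow p (-(1/2)) * q * mpow p (-(1/2))) t * mpow p (1/2)

/-- The Riemannian (trace-metric) distance on positive definite matrices, expressed as the
Euclidean norm of the vector of base-2 logarithms of the eigenvalues of `p^{-1/2} q p^{-1/2}`. -/
noncomputable def rdist (p q : Matrix (Fin n) (Fin n) ℝ) : ℝ :=
  Real.sqrt (∑ i : Fin n,
    (Real.logb 2 (eigsDesc (mpow p (-(1/2)) * q * mpow p (-(1/2))) i)) ^ 2)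


private lemma contOnSpec (A : Matrix (Fin n) (Fin n) ℝ) (f : ℝ → ℝ) :
    ContinuousOn f (spectrum ℝ A) := by
  rw [continuousOn_iff_continuous_restrict]
  have : Finite (spectrum ℝ A) := A.finite_real_spectrum
  exact continuous_of_discreteTopology

private lemma mpow_eq_cfc {A : Matrix (Fin n) (Fin n) ℝ} (hA : A.IsHermitian) (t : ℝ) :
    mpow A t = cfc (fun x : ℝ => x ^ t) A := by
  rw [mpow, dif_pos hA, hA.cfc_eq]; rfl

private lemma spec_pos {p : Matrix (Fin n) (Fin n) ℝ} (hp : p.PosDef) :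
    ∀ x ∈ spectrum ℝ p, 0 < x := by
  intro x hx
  rw [Matrix.IsHermitian.spectrum_real_eq_range_eigenvalues hp.isHermitian] at hx
  obtain ⟨i, rfl⟩ := hx
  exact hp.eigenvalues_pos i

private lemma mpow_isHermitian {A : Matrix (Fin n) (Fin n) ℝ} (hA : A.IsHermitian) (t : ℝ) :
    (mpow A t).IsHermitian := by
  rw [mpow_eq_cfc hA t]
  exact cfc_predicate _ A

private lemma mpow_mul_mpow {p : Matrix (Fin n) (Fin n) ℝ} (hp : p.PosDef) (s t : ℝ) :
    mpow p s * mpow p t = mpow p (s + t) := by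
  have h := hp.isHermitian
  rw [mpow_eq_cfc h, mpow_eq_cfc h, mpow_eq_cfc h,
    ← cfc_mul _ _ _ (contOnSpec p _) (contOnSpec p _)]
  exact cfc_congr fun x hx => (Real.rpow_add (spec_pos hp x hx) s t).symm

private lemma mpow_zero {p : Matrix (Fin n) (Fin n) ℝ} (hp : p.PosDef) : mpow p 0 = 1 := by
  have h : IsSelfAdjoint p := hp.isHermitian
  rw [mpow_eq_cfc hp.isHermitian]
  calc cfc (fun x : ℝ => x ^ (0:ℝ)) p = cfc (fun _ : ℝ => (1:ℝ)) p :=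
        cfc_congr fun x _ => Real.rpow_zero x
    _ = 1 := cfc_const_one ℝ p

private lemma mpow_one {p : Matrix (Fin n) (Fin n) ℝ} (hp : p.PosDef) : mpow p 1 = p := by
  have h : IsSelfAdjoint p := hp.isHermitian
  rw [mpow_eq_cfc hp.isHermitian]
  calc cfc (fun x : ℝ => x ^ (1:ℝ)) p = cfc (fun x : ℝ => x) p :=
        cfc_congr fun x _ => Real.rpow_one x
    _ = p := cfc_id' ℝ p

private def conjSAH (u : Matrix (Fin n) (Fin n) ℝ)
    (hu : u ∈ unitary (Matrix (Fin n) (Fin n) ℝ)) :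
    Matrix (Fin n) (Fin n) ℝ →⋆ₐ[ℝ] Matrix (Fin n) (Fin n) ℝ where
  toFun x := u * x * star u
  map_one' := by simpa using (Unitary.mem_iff.mp hu).2
  map_mul' x y := by
    have h : star u * u = 1 := (Unitary.mem_iff.mp hu).1
    calc u * (x * y) * star u = (u * x) * (star u * u) * (y * star u) := by
          rw [h]; noncomm_ring
      _ = (u * x * star u) * (u * y * star u) := by noncomm_ring
  map_zero' := by simp
  map_add' x y := by noncomm_ring
  commutes' r := by
    have h2 : u * star u = 1 := (Unitary.mem_iff.mp hu).2
    simp only [Algebra.algebraMap_eq_smul_one]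
    rw [mul_smul_comm, mul_one, smul_mul_assoc, h2]
  map_star' x := by
    simp only [StarMul.star_mul, star_star]
    noncomm_ring

private lemma cfc_conj {u a : Matrix (Fin n) (Fin n) ℝ}
    (hu : u ∈ unitary (Matrix (Fin n) (Fin n) ℝ)) (ha : a.IsHermitian) (f : ℝ → ℝ) :
    cfc f (u * a * star u) = u * cfc f a * star u := by
  have hsa : IsSelfAdjoint a := ha
  have hsa2 : IsSelfAdjoint (u * a * star u) := hsa.conjugate u
  have hfin : Finite (spectrum ℝ a) := a.finite_real_spectrum
  have hcont : Continuous fun x : Matrix (Fin n) (Fin n) ℝ => u * x * star u :=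
    (continuous_const.mul continuous_id).mul continuous_const
  exact (StarAlgHomClass.map_cfc (S := ℝ) (conjSAH u hu) f a (contOnSpec a f) hcont hsa hsa2).symm

private lemma mpow_conj {u a : Matrix (Fin n) (Fin n) ℝ}
    (hu : u ∈ unitary (Matrix (Fin n) (Fin n) ℝ)) (ha : a.IsHermitian) (t : ℝ) :
    mpow (u * a * star u) t = u * mpow a t * star u := by
  have hsa2 : IsSelfAdjoint (u * a * star u) := (show IsSelfAdjoint a from ha).conjugate u
  rw [mpow_eq_cfc hsa2, mpow_eq_cfc ha, cfc_conj hu ha]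

private lemma star_eq_transpose (M : Matrix (Fin n) (Fin n) ℝ) : star M = Mᵀ := by
  ext i j; simp [Matrix.star_apply]

private lemma posDef_conj {g p : Matrix (Fin n) (Fin n) ℝ} (hg : IsUnit g) (hp : p.PosDef) :
    (g * p * gᵀ).PosDef := by
  have hsd : (g * p * gᴴ).PosSemidef := hp.posSemidef.mul_mul_conjTranspose_same g
  have hct : gᴴ = gᵀ := by ext i j; simp
  rw [hct] at hsd
  refine posDef_iff_dotProduct_mulVec.mpr ⟨hsd.1, fun x hx => ?_⟩
  have hgx : gᵀ *ᵥ x ≠ 0 := by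
    intro h
    apply hx
    have hdet : IsUnit gᵀ.det := by
      rw [Matrix.det_transpose]; exact hg.map (Matrix.detMonoidHom)
    have := congrArg (fun v => (gᵀ)⁻¹ *ᵥ v) h
    simpa [Matrix.mulVec_mulVec, Matrix.nonsing_inv_mul _ hdet] using this
  have hpos := hp.dotProduct_mulVec_pos hgx
  have : star x ⬝ᵥ ((g * p * gᵀ) *ᵥ x) = star (gᵀ *ᵥ x) ⬝ᵥ (p *ᵥ (gᵀ *ᵥ x)) := by
    simp only [star_trivial, ← Matrix.mulVec_mulVec]
    rw [Matrix.dotProduct_mulVec (v := x) (A := g), ← Matrix.mulVec_transpose]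
  rw [this]
  exact hpos


/-- The congruence action `g ∗ p = g p gᵀ` of an invertible matrix
commutes with geodesics: `g (p #_t q) gᵀ = (g p gᵀ) #_t (g q gᵀ)`. -/
theorem statement3 {n : ℕ} (g p q : Matrix (Fin n) (Fin n) ℝ) (hg : IsUnit g)
    (hp : p.PosDef) (hq : q.PosDef) (t : ℝ) (ht : t ∈ Set.Icc (0:ℝ) 1) :
    g * geo p q t * gᵀ = geo (g * p * gᵀ) (g * q * gᵀ) t := by
  have hp' : (g * p * gᵀ).PosDef := posDef_conj hg hp
  unfold geo
  set P := mpow p (1/2) with hPdef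
  set Pi := mpow p (-(1/2)) with hPidef
  set S := mpow (g * p * gᵀ) (1/2) with hSdef
  set Si := mpow (g * p * gᵀ) (-(1/2)) with hSidef
  have hPP : P * P = p := by
    rw [hPdef, mpow_mul_mpow hp]; norm_num; exact mpow_one hp
  have hPiP : Pi * P = 1 := by
    rw [hPidef, hPdef, mpow_mul_mpow hp]; norm_num; exact mpow_zero hp
  have hPPi : P * Pi = 1 := by
    rw [hPidef, hPdef, mpow_mul_mpow hp]; norm_num; exact mpow_zero hp
  have hSS : S * S = g * p * gᵀ := by
    rw [hSdef, mpow_mul_mpow hp']; norm_num; exact mpow_one hp'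
  have hSiS : Si * S = 1 := by
    rw [hSidef, hSdef, mpow_mul_mpow hp']; norm_num; exact mpow_zero hp'
  have hSSi : S * Si = 1 := by
    rw [hSidef, hSdef, mpow_mul_mpow hp']; norm_num; exact mpow_zero hp'
  have hPh : P.IsHermitian := hPdef ▸ mpow_isHermitian hp.isHermitian _
  have hPih : Pi.IsHermitian := hPidef ▸ mpow_isHermitian hp.isHermitian _
  have hSih : Si.IsHermitian := hSidef ▸ mpow_isHermitian hp'.isHermitian _
  have hsP : star P = P := hPh
  have hsPi : star Pi = Pi := hPih
  have hsSi : star Si = Si := hSih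
  set u := Si * g * P with hudef
  have hstarU : star u = P * gᵀ * Si := by
    rw [hudef]
    simp only [StarMul.star_mul, hsP, hsSi, star_eq_transpose g, mul_assoc]
  have huu : u * star u = 1 := by
    rw [hudef, hstarU]
    calc (Si * g * P) * (P * gᵀ * Si) = Si * (g * (P * P) * gᵀ) * Si := by noncomm_ring
      _ = Si * (g * p * gᵀ) * Si := by rw [hPP]
      _ = Si * (S * S) * Si := by rw [← hSS]
      _ = (Si * S) * (S * Si) := by noncomm_ring
      _ = 1 := by rw [hSiS, hSSi, one_mul]
  have hu : u ∈ unitary (Matrix (Fin n) (Fin n) ℝ) := by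
    rw [Unitary.mem_iff]
    exact ⟨mul_eq_one_comm.mp huu, huu⟩
  have hA : (Pi * q * Pi).IsHermitian := by
    have h1 := Matrix.isHermitian_mul_mul_conjTranspose Pi hq.isHermitian
    rwa [hPih.eq] at h1
  have hmid : Si * (g * q * gᵀ) * Si = u * (Pi * q * Pi) * star u := by
    rw [hudef, hstarU]
    calc Si * (g * q * gᵀ) * Si = Si * (g * (1 * q * 1) * gᵀ) * Si := by
          rw [one_mul, mul_one]
      _ = Si * (g * ((P * Pi) * q * (Pi * P)) * gᵀ) * Si := by rw [hPPi, hPiP]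
      _ = (Si * g * P) * (Pi * q * Pi) * (P * gᵀ * Si) := by noncomm_ring
  have hSu : S * u = g * P := by
    rw [hudef]
    calc S * (Si * g * P) = (S * Si) * (g * P) := by noncomm_ring
      _ = g * P := by rw [hSSi, one_mul]
  have huS : star u * S = P * gᵀ := by
    rw [hstarU]
    calc (P * gᵀ * Si) * S = (P * gᵀ) * (Si * S) := by noncomm_ring
      _ = P * gᵀ := by rw [hSiS, mul_one]
  rw [hmid, mpow_conj hu hA t]
  rw [show S * (u * mpow (Pi * q * Pi) t * star u) * S
      = (S * u) * mpow (Pi * q * Pi) t * (star u * S) from by noncomm_ring, hSu, huS]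
  noncomm_ring
end
end

section
/- The vectorial distance on positive definite matrices satisfies the triangle inequality with respect to the weak-majorization order ⪯: for all symmetric positive definite p, q, r, d⃗(p,q) ⪯ d⃗(p,r) + d⃗(r,q), where ξ ⪯ η means Σ_{i=1}^k ξᵢ ≤ Σ_{i=1}^k ηᵢ for all k < n and Σ_{i=1}^n ξᵢ = Σ_{i=1}^n ηᵢ. -/
open Matrix

noncomputable section

variable {n : ℕ}

section Aux

open Matrix Finset Equiv

namespace SVAux

variable {R : Type*} [CommRing R] {k m : ℕ}

/-! ### Cauchy–Binet -/

lemma step1 (A : Matrix (Fin k) (Fin m) R) (B : Matrix (Fin m) (Fin k) R) :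
    (A * B).det = ∑ f : Fin k → Fin m,
      (∏ i, A i (f i)) * (B.submatrix f id).det := by
  have h : (A * B).det = Matrix.detRowAlternating (fun i => ∑ j, A i j • B j) := by
    congr 1
    ext i j
    simp [Matrix.mul_apply, Finset.sum_apply]
  rw [h]
  have h2 := (Matrix.detRowAlternating (R := R) (n := Fin k)).toMultilinearMap.map_sum
    (g := fun i j => A i j • B j)
  rw [show Matrix.detRowAlternating (fun i => ∑ j, A i j • B j)
      = (Matrix.detRowAlternating (R := R) (n := Fin k)).toMultilinearMap
          (fun i => ∑ j, A i j • B j) from rfl, h2]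
  refine Finset.sum_congr rfl fun f _ => ?_
  have h3 := (Matrix.detRowAlternating (R := R) (n := Fin k)).toMultilinearMap.map_smul_univ
    (fun i => A i (f i)) (fun i => B (f i))
  rw [h3]
  simp only [smul_eq_mul]
  rfl

lemma step2 (A : Matrix (Fin k) (Fin m) R) (B : Matrix (Fin m) (Fin k) R) :
    (A * B).det = ∑ f ∈ univ.filter (fun f : Fin k → Fin m => Function.Injective f),
      (∏ i, A i (f i)) * (B.submatrix f id).det := by
  rw [step1]
  symm
  refine Finset.sum_subset (Finset.filter_subset _ _) fun f _ hf => ?_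
  simp only [Finset.mem_filter, Finset.mem_univ, true_and] at hf
  rw [Function.not_injective_iff] at hf
  obtain ⟨i, j, hij, hne⟩ := hf
  have : (B.submatrix f id).det = 0 := by
    apply Matrix.det_zero_of_row_eq hne
    ext c
    simp [Matrix.submatrix_apply, hij]
  rw [this, mul_zero]

abbrev CBIdx (k m : ℕ) :=
  {S : Finset (Fin m) // S ∈ Finset.powersetCard k (Finset.univ : Finset (Fin m))}

lemma CBIdx.card (p : CBIdx k m) : p.1.card = k := (Finset.mem_powersetCard.mp p.2).2

noncomputable def CBIdx.emb (p : CBIdx k m) : Fin k → Fin m := p.1.orderEmbOfFin p.card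

lemma CBIdx.emb_injective (p : CBIdx k m) : Function.Injective p.emb :=
  (p.1.orderEmbOfFin p.card).injective

lemma CBIdx.emb_strictMono (p : CBIdx k m) : StrictMono p.emb :=
  (p.1.orderEmbOfFin p.card).strictMono

lemma CBIdx.emb_mem (p : CBIdx k m) (i : Fin k) : p.emb i ∈ p.1 :=
  Finset.orderEmbOfFin_mem _ _ _

noncomputable def toPair (f : Fin k → Fin m) (hf : Function.Injective f) :
    CBIdx k m × Equiv.Perm (Fin k) := by
  refine ⟨⟨Finset.image f univ, ?_⟩, ?_⟩
  · exact Finset.mem_powersetCard.mpr ⟨Finset.subset_univ _, by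
      rw [Finset.card_image_of_injective _ hf, Finset.card_univ, Fintype.card_fin]⟩
  · have hcard : (Finset.image f univ).card = k := by
      rw [Finset.card_image_of_injective _ hf, Finset.card_univ, Fintype.card_fin]
    refine Equiv.ofBijective
      (fun i => ((Finset.image f univ).orderIsoOfFin hcard).symm ⟨f i, by simp⟩) ?_
    refine Finite.injective_iff_bijective.mp fun a b hab => hf ?_
    have := congrArg (((Finset.image f univ).orderIsoOfFin hcard)) hab
    simp only [OrderIso.apply_symm_apply] at this
    exact congrArg Subtype.val this

lemma toPair_emb (f : Fin k → Fin m) (hf : Function.Injective f) (i : Fin k) :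
    (toPair f hf).1.emb ((toPair f hf).2 i) = f i := by
  simp only [toPair, CBIdx.emb, Equiv.ofBijective_apply]
  rw [← Finset.coe_orderIsoOfFin_apply]
  simp

lemma step3 (T : (Fin k → Fin m) → R) :
    ∑ f ∈ univ.filter (fun f : Fin k → Fin m => Function.Injective f), T f
      = ∑ q : CBIdx k m × Equiv.Perm (Fin k), T (fun i => q.1.emb (q.2 i)) := by
  symm
  refine Finset.sum_bij' (i := fun q (_ : q ∈ univ) => fun i => q.1.emb (q.2 i))
    (j := fun f hf => toPair f (by simpa using (Finset.mem_filter.mp hf).2))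
    (fun q _ => ?_) (fun f hf => Finset.mem_univ _) (fun q hq => ?_) (fun f hf => ?_)
    (fun q _ => rfl)
  · exact Finset.mem_filter.mpr ⟨Finset.mem_univ _,
      (q.1.emb_injective).comp q.2.injective⟩
  · set g := fun i => q.1.emb (q.2 i) with hg
    have hginj : Function.Injective g := (q.1.emb_injective).comp q.2.injective
    have hS : Finset.image g univ = q.1.1 := by
      apply Finset.eq_of_subset_of_card_le
      · intro x hx
        simp only [Finset.mem_image] at hx
        obtain ⟨i, _, rfl⟩ := hx
        exact q.1.emb_mem _
      · rw [Finset.card_image_of_injective _ hginj, Finset.card_univ, Fintype.card_fin,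
          q.1.card]
    have h1 : (toPair g hginj).1 = q.1 := Subtype.ext hS
    have h2 : (toPair g hginj).2 = q.2 := by
      refine Equiv.ext fun i => ?_
      apply q.1.emb_injective
      have e1 : (toPair g hginj).1.emb = q.1.emb := by rw [h1]
      rw [← e1, toPair_emb]
      rw [e1]
    ext1
    · exact h1
    · exact h2
  · funext i
    exact toPair_emb f _ i

theorem cauchyBinet (A : Matrix (Fin k) (Fin m) R) (B : Matrix (Fin m) (Fin k) R) :
    (A * B).det = ∑ p : CBIdx k m,
      (A.submatrix id p.emb).det * (B.submatrix p.emb id).det := by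
  rw [step2, step3 (fun f => (∏ i, A i (f i)) * (B.submatrix f id).det),
    Fintype.sum_prod_type]
  refine Finset.sum_congr rfl fun p _ => ?_
  have hdetA : (A.submatrix id p.emb).det
      = ∑ τ : Equiv.Perm (Fin k), ((Equiv.Perm.sign τ : ℤ) : R) * ∏ i, A i (p.emb (τ i)) := by
    rw [← Matrix.det_transpose, Matrix.det_apply']
    refine Finset.sum_congr rfl fun τ _ => ?_
    congr 1
  rw [hdetA, Finset.sum_mul]
  refine Finset.sum_congr rfl fun τ _ => ?_
  have hsub : (B.submatrix (fun i => p.emb (τ i)) id)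
      = (B.submatrix p.emb id).submatrix τ id := rfl
  rw [hsub, Matrix.det_permute]
  push_cast
  ring

lemma le_val_of_strictMono {f : Fin k → Fin m} (hf : StrictMono f) (j : Fin k) :
    (j : ℕ) ≤ (f j : ℕ) := by
  obtain ⟨jv, hj⟩ := j
  induction jv with
  | zero => exact Nat.zero_le _
  | succ a ih =>
    have ha : a < k := Nat.lt_of_succ_lt hj
    have h2 : ((f ⟨a, ha⟩) : ℕ) < ((f ⟨a + 1, hj⟩) : ℕ) := hf (Nat.lt_succ_self a)
    have h3 := ih ha
    have h4 : a < ((f ⟨a + 1, hj⟩) : ℕ) := Nat.lt_of_le_of_lt (by simpa using h3) h2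
    simpa using Nat.succ_le_of_lt h4

lemma transpose_submatrix_det (X : Matrix (Fin m) (Fin k) R) (p : CBIdx k m) :
    (Xᵀ.submatrix id p.emb).det = (X.submatrix p.emb id).det := by
  rw [show Xᵀ.submatrix id p.emb = (X.submatrix p.emb id)ᵀ from rfl, Matrix.det_transpose]

lemma sum_det_sq (X : Matrix (Fin m) (Fin k) ℝ) (hX : Xᵀ * X = 1) :
    ∑ p : CBIdx k m, (X.submatrix p.emb id).det ^ 2 = 1 := by
  have h := cauchyBinet (Xᵀ) X
  rw [hX, Matrix.det_one] at h
  rw [h]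
  symm
  refine Finset.sum_congr rfl fun p _ => ?_
  rw [transpose_submatrix_det, sq]

/-- the diagonal case of the singular value bound -/
lemma det_conj_diag_le {d : Fin m → ℝ} (hd : Antitone d) (hd0 : ∀ i, 0 ≤ d i)
    (hk : k ≤ m) (X Y : Matrix (Fin m) (Fin k) ℝ) (hX : Xᵀ * X = 1) (hY : Yᵀ * Y = 1) :
    |(Xᵀ * Matrix.diagonal d * Y).det| ≤ ∏ j : Fin k, d (Fin.castLE hk j) := by
  have hCB : (Xᵀ * Matrix.diagonal d * Y).det = ∑ p : CBIdx k m,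
      (∏ j, d (p.emb j)) * ((X.submatrix p.emb id).det * (Y.submatrix p.emb id).det) := by
    rw [cauchyBinet (Xᵀ * Matrix.diagonal d) Y]
    refine Finset.sum_congr rfl fun p _ => ?_
    have hsub : (Xᵀ * Matrix.diagonal d).submatrix id p.emb
        = (Xᵀ.submatrix id p.emb) * Matrix.diagonal (d ∘ p.emb) := by
      ext i j
      simp [Matrix.mul_diagonal, Matrix.submatrix_apply]
    rw [hsub, Matrix.det_mul, Matrix.det_diagonal, transpose_submatrix_det]
    simp only [Function.comp_apply]
    ring
  have habs : |(Xᵀ * Matrix.diagonal d * Y).det| ≤ ∑ p : CBIdx k m,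
      (∏ j, d (p.emb j)) * (|(X.submatrix p.emb id).det| * |(Y.submatrix p.emb id).det|) := by
    rw [hCB]
    refine (Finset.abs_sum_le_sum_abs _ _).trans (le_of_eq ?_)
    refine Finset.sum_congr rfl fun p _ => ?_
    rw [abs_mul, abs_mul, abs_of_nonneg (Finset.prod_nonneg fun j _ => hd0 _)]
  have hprodle : ∀ p : CBIdx k m, (∏ j, d (p.emb j)) ≤ ∏ j : Fin k, d (Fin.castLE hk j) := by
    intro p
    refine Finset.prod_le_prod (fun j _ => hd0 _) fun j _ => ?_
    refine hd ?_
    exact le_val_of_strictMono p.emb_strictMono j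
  have hCS : ∑ p : CBIdx k m, |(X.submatrix p.emb id).det| * |(Y.submatrix p.emb id).det| ≤ 1 := by
    have h2 := Finset.sum_mul_sq_le_sq_mul_sq Finset.univ
      (fun p : CBIdx k m => |(X.submatrix p.emb id).det|)
      (fun p : CBIdx k m => |(Y.submatrix p.emb id).det|)
    simp only [sq_abs] at h2
    rw [sum_det_sq X hX, sum_det_sq Y hY, mul_one] at h2
    have h3 : (0:ℝ) ≤ ∑ p : CBIdx k m,
        |(X.submatrix p.emb id).det| * |(Y.submatrix p.emb id).det| :=
      Finset.sum_nonneg fun p _ => mul_nonneg (abs_nonneg _) (abs_nonneg _)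
    nlinarith
  refine habs.trans ?_
  calc ∑ p : CBIdx k m, (∏ j, d (p.emb j)) *
        (|(X.submatrix p.emb id).det| * |(Y.submatrix p.emb id).det|)
      ≤ ∑ p : CBIdx k m, (∏ j : Fin k, d (Fin.castLE hk j)) *
        (|(X.submatrix p.emb id).det| * |(Y.submatrix p.emb id).det|) := by
        refine Finset.sum_le_sum fun p _ => ?_
        exact mul_le_mul_of_nonneg_right (hprodle p)
          (mul_nonneg (abs_nonneg _) (abs_nonneg _))
    _ = (∏ j : Fin k, d (Fin.castLE hk j)) * ∑ p : CBIdx k m,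
        |(X.submatrix p.emb id).det| * |(Y.submatrix p.emb id).det| := by
        rw [Finset.mul_sum]
    _ ≤ (∏ j : Fin k, d (Fin.castLE hk j)) * 1 :=
        mul_le_mul_of_nonneg_left hCS (Finset.prod_nonneg fun j _ => hd0 _)
    _ = _ := mul_one _

end SVAux
end Aux

section Aux2

open Matrix

namespace SVAux

variable {n : ℕ}

lemma star_eq_t (M : Matrix (Fin n) (Fin n) ℝ) : star M = Mᵀ := by
  rw [Matrix.star_eq_conjTranspose, Matrix.conjTranspose_eq_transpose_of_trivial]

variable {A : Matrix (Fin n) (Fin n) ℝ}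

/-! ### mpow -/

lemma mpow_def (hA : A.IsHermitian) (t : ℝ) :
    mpow A t = (hA.eigenvectorUnitary : Matrix (Fin n) (Fin n) ℝ) *
      Matrix.diagonal (fun i => (hA.eigenvalues i) ^ t) *
      (star (hA.eigenvectorUnitary : Matrix (Fin n) (Fin n) ℝ)) := by
  rw [mpow, dif_pos hA]

lemma unit_star_mul (hA : A.IsHermitian) :
    star (hA.eigenvectorUnitary : Matrix (Fin n) (Fin n) ℝ) *
      (hA.eigenvectorUnitary : Matrix (Fin n) (Fin n) ℝ) = 1 :=
  Matrix.mem_unitaryGroup_iff'.mp (hA.eigenvectorUnitary).2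

lemma unit_mul_star (hA : A.IsHermitian) :
    (hA.eigenvectorUnitary : Matrix (Fin n) (Fin n) ℝ) *
      star (hA.eigenvectorUnitary : Matrix (Fin n) (Fin n) ℝ) = 1 :=
  Matrix.mem_unitaryGroup_iff.mp (hA.eigenvectorUnitary).2

lemma spectral (hA : A.IsHermitian) :
    A = (hA.eigenvectorUnitary : Matrix (Fin n) (Fin n) ℝ) *
      Matrix.diagonal hA.eigenvalues *
      (star (hA.eigenvectorUnitary : Matrix (Fin n) (Fin n) ℝ)) := by
  have := hA.spectral_theorem
  simpa [RCLike.ofReal_real_eq_id] using this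

lemma posDef_conj {M U : Matrix (Fin n) (Fin n) ℝ} (hM : M.PosDef)
    (hU : U * star U = 1) : (U * M * star U).PosDef := by
  rw [Matrix.posDef_iff_dotProduct_mulVec]
  constructor
  · have hMh : Mᴴ = M := hM.1
    show (U * M * star U)ᴴ = U * M * star U
    rw [Matrix.star_eq_conjTranspose, Matrix.conjTranspose_mul, Matrix.conjTranspose_mul,
      Matrix.conjTranspose_conjTranspose, hMh, Matrix.mul_assoc]
  · intro x hx
    have key : star x ⬝ᵥ (U * M * star U) *ᵥ x
        = star (star U *ᵥ x) ⬝ᵥ M *ᵥ (star U *ᵥ x) := by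
      rw [← Matrix.mulVec_mulVec, ← Matrix.mulVec_mulVec]
      rw [Matrix.dotProduct_mulVec, Matrix.dotProduct_mulVec, Matrix.star_mulVec]
      rw [Matrix.star_eq_conjTranspose, Matrix.conjTranspose_conjTranspose]
      simp [Matrix.dotProduct_mulVec, Matrix.mul_assoc]
    rw [key]
    refine hM.dotProduct_mulVec_pos fun h0 => hx ?_
    have : U *ᵥ (star U *ᵥ x) = U *ᵥ 0 := by rw [h0]
    rwa [Matrix.mulVec_mulVec, hU, Matrix.one_mulVec, Matrix.mulVec_zero] at this

lemma mpow_posDef (hp : A.PosDef) (t : ℝ) : (mpow A t).PosDef := by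
  rw [mpow_def hp.1]
  exact posDef_conj (Matrix.PosDef.diagonal fun i =>
    Real.rpow_pos_of_pos (hp.eigenvalues_pos i) t) (unit_mul_star hp.1)

lemma mpow_mul_mpow (hp : A.PosDef) (s t : ℝ) :
    mpow A s * mpow A t = mpow A (s + t) := by
  rw [mpow_def hp.1, mpow_def hp.1, mpow_def hp.1]
  set U := (hp.1.eigenvectorUnitary : Matrix (Fin n) (Fin n) ℝ)
  have h1 : star U * U = 1 := unit_star_mul hp.1
  have hd : Matrix.diagonal (fun i => hp.1.eigenvalues i ^ s) *
      Matrix.diagonal (fun i => hp.1.eigenvalues i ^ t)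
      = Matrix.diagonal (fun i => hp.1.eigenvalues i ^ (s + t)) := by
    rw [Matrix.diagonal_mul_diagonal]
    refine congrArg Matrix.diagonal (funext fun i => ?_)
    rw [← Real.rpow_add (hp.eigenvalues_pos i)]
  calc U * Matrix.diagonal (fun i => hp.1.eigenvalues i ^ s) * star U *
        (U * Matrix.diagonal (fun i => hp.1.eigenvalues i ^ t) * star U)
      = U * (Matrix.diagonal (fun i => hp.1.eigenvalues i ^ s) * ((star U * U) *
        Matrix.diagonal (fun i => hp.1.eigenvalues i ^ t))) * star U := by
        simp only [Matrix.mul_assoc]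
    _ = _ := by rw [h1, Matrix.one_mul, hd]

lemma mpow_zero (hA : A.IsHermitian) : mpow A 0 = 1 := by
  rw [mpow_def hA]
  simp only [Real.rpow_zero, Matrix.diagonal_one, Matrix.mul_one]
  exact unit_mul_star hA

lemma mpow_one (hA : A.IsHermitian) : mpow A 1 = A := by
  rw [mpow_def hA]
  simp only [Real.rpow_one]
  exact (spectral hA).symm

lemma mpow_isHermitian (hA : A.IsHermitian) (t : ℝ) : (mpow A t).IsHermitian := by
  rw [mpow_def hA]
  show _ = _
  rw [Matrix.star_eq_conjTranspose, Matrix.conjTranspose_mul, Matrix.conjTranspose_mul,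
    Matrix.conjTranspose_conjTranspose, Matrix.diagonal_conjTranspose, Matrix.mul_assoc]
  simp [Pi.star_def]

lemma mpow_transpose (hA : A.IsHermitian) (t : ℝ) : (mpow A t)ᵀ = mpow A t := by
  have h := mpow_isHermitian hA t
  rw [Matrix.IsHermitian] at h
  rw [← Matrix.conjTranspose_eq_transpose_of_trivial, h]

/-! ### eigsDesc -/

noncomputable def dperm (f : Fin n → ℝ) : Equiv.Perm (Fin n) :=
  (Fin.revPerm).trans (Tuple.sort f)

lemma eigsDesc_def (hA : A.IsHermitian) :
    eigsDesc A = fun i => hA.eigenvalues (dperm hA.eigenvalues i) := by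
  rw [eigsDesc, dif_pos hA]
  rfl

lemma antitone_eigsDesc (hA : A.IsHermitian) : Antitone (eigsDesc A) := by
  rw [eigsDesc_def hA]
  intro i j hij
  exact Tuple.monotone_sort hA.eigenvalues (Fin.rev_le_rev.mpr hij)

lemma prod_eigsDesc (hA : A.IsHermitian) :
    ∏ i, eigsDesc A i = ∏ i, hA.eigenvalues i := by
  rw [eigsDesc_def hA]
  exact Equiv.prod_comp (dperm hA.eigenvalues) hA.eigenvalues

lemma det_eq_prod_eigsDesc (hA : A.IsHermitian) : A.det = ∏ i, eigsDesc A i := by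
  rw [prod_eigsDesc hA]
  simpa using hA.det_eq_prod_eigenvalues

lemma eigsDesc_pos (hp : A.PosDef) (i : Fin n) : 0 < eigsDesc A i := by
  rw [eigsDesc_def hp.1]
  exact hp.eigenvalues_pos _

lemma eigsDesc_nonneg (hp : A.PosSemidef) (i : Fin n) : 0 ≤ eigsDesc A i := by
  rw [eigsDesc_def hp.1]
  exact hp.eigenvalues_nonneg _

lemma conj_diag_apply {m k : ℕ} (X Y : Matrix (Fin m) (Fin k) ℝ) (d : Fin k → ℝ)
    (a b : Fin m) : (X * Matrix.diagonal d * Yᵀ) a b = ∑ c, X a c * d c * Y b c := by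
  rw [Matrix.mul_apply]
  refine Finset.sum_congr rfl fun c _ => ?_
  rw [Matrix.mul_diagonal, Matrix.transpose_apply]

lemma spectralDesc (hA : A.IsHermitian) : ∃ W : Matrix (Fin n) (Fin n) ℝ,
    Wᵀ * W = 1 ∧ W * Wᵀ = 1 ∧ A = W * Matrix.diagonal (eigsDesc A) * Wᵀ := by
  set U := (hA.eigenvectorUnitary : Matrix (Fin n) (Fin n) ℝ) with hU
  have h1 : Uᵀ * U = 1 := by
    rw [← star_eq_t]; exact unit_star_mul hA
  have h2 : U * Uᵀ = 1 := by
    rw [← star_eq_t]; exact unit_mul_star hA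
  have hspec : A = U * Matrix.diagonal hA.eigenvalues * Uᵀ := by
    rw [← star_eq_t]
    exact spectral hA
  set π := dperm hA.eigenvalues with hπ
  refine ⟨U.submatrix id π, ?_, ?_, ?_⟩
  · ext a b
    have e1 : ((U.submatrix id π)ᵀ * U.submatrix id π) a b = (Uᵀ * U) (π a) (π b) := by
      rw [Matrix.mul_apply, Matrix.mul_apply]
      rfl
    rw [e1, h1]
    simp [Matrix.one_apply, (Equiv.injective π).eq_iff]
  · ext a b
    have e1 : (U.submatrix id π * (U.submatrix id π)ᵀ) a b = (U * Uᵀ) a b := by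
      rw [Matrix.mul_apply, Matrix.mul_apply]
      exact Fintype.sum_equiv π _ _ fun c => rfl
    rw [e1, h2]
  · rw [eigsDesc_def hA]
    ext a b
    have hL : A a b = ∑ c, U a c * hA.eigenvalues c * U b c := by
      conv_lhs => rw [hspec]
      exact conj_diag_apply U U hA.eigenvalues a b
    rw [conj_diag_apply, hL]
    exact (Fintype.sum_equiv π _ _ fun c => rfl).symm

lemma compress {k : ℕ} (W : Matrix (Fin n) (Fin n) ℝ) (hW : Wᵀ * W = 1) (d : Fin n → ℝ)
    (e : Fin k → Fin n) (he : Function.Injective e) :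
    (W.submatrix id e)ᵀ * (W * Matrix.diagonal d * Wᵀ) * (W.submatrix id e)
      = Matrix.diagonal (d ∘ e) := by
  set V := W.submatrix id e with hV
  have hWtV : Wᵀ * V = (1 : Matrix (Fin n) (Fin n) ℝ).submatrix id e := by
    ext i j
    have := congrFun (congrFun hW i) (e j)
    rw [Matrix.mul_apply] at this ⊢
    exact this
  have key : Vᵀ * (W * Matrix.diagonal d * Wᵀ) * V
      = (Wᵀ * V)ᵀ * Matrix.diagonal d * (Wᵀ * V) := by
    rw [Matrix.transpose_mul, Matrix.transpose_transpose]
    simp only [Matrix.mul_assoc]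
  rw [key, hWtV]
  ext a b
  set F := (1 : Matrix (Fin n) (Fin n) ℝ).submatrix id e with hF
  have hFe : ∀ c j, F c j = if c = e j then 1 else 0 := by
    intro c j
    simp [hF, Matrix.one_apply]
  have e2 : (Fᵀ * Matrix.diagonal d * F) a b = ∑ c, F c a * d c * F c b := by
    have := conj_diag_apply (Fᵀ) (Fᵀ) d a b
    rw [Matrix.transpose_transpose] at this
    exact this
  rw [e2]
  rw [Finset.sum_eq_single (e a)]
  · rw [hFe, hFe, if_pos rfl, one_mul]
    by_cases hab : a = b
    · subst hab
      rw [if_pos rfl, mul_one, Matrix.diagonal_apply_eq]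
      rfl
    · rw [if_neg (fun h => hab (he h)), mul_zero, Matrix.diagonal_apply_ne _ hab]
  · intro c _ hc
    rw [hFe, if_neg (fun h => hc h), zero_mul, zero_mul]
  · intro h
    exact absurd (Finset.mem_univ _) h

end SVAux
end Aux2

section Aux3

open Matrix

namespace SVAux

variable {n : ℕ} {g A B : Matrix (Fin n) (Fin n) ℝ}

/-! ### singular values -/

lemma transpose_mul_self_posSemidef (g : Matrix (Fin n) (Fin n) ℝ) : (gᵀ * g).PosSemidef := by
  have := Matrix.posSemidef_conjTranspose_mul_self g
  rwa [Matrix.conjTranspose_eq_transpose_of_trivial] at this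

lemma transpose_mul_self_isHermitian (g : Matrix (Fin n) (Fin n) ℝ) : (gᵀ * g).IsHermitian :=
  (transpose_mul_self_posSemidef g).isHermitian

lemma dotProduct_self_pos {x : Fin n → ℝ} (hx : x ≠ 0) : 0 < x ⬝ᵥ x := by
  have h1 : (0:ℝ) ≤ x ⬝ᵥ x := Finset.sum_nonneg fun i _ => mul_self_nonneg _
  rcases h1.lt_or_eq with h | h
  · exact h
  · exact absurd (dotProduct_self_eq_zero.mp h.symm) hx

lemma posDef_transpose_mul_self (hg : g.det ≠ 0) : (gᵀ * g).PosDef := by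
  refine Matrix.posDef_iff_dotProduct_mulVec.mpr ⟨transpose_mul_self_isHermitian g, fun x hx => ?_⟩
  have hMx : g *ᵥ x ≠ 0 := by
    intro h0
    apply hx
    have h1 : g⁻¹ *ᵥ (g *ᵥ x) = x := by
      rw [Matrix.mulVec_mulVec, Matrix.nonsing_inv_mul _ (isUnit_iff_ne_zero.mpr hg),
        Matrix.one_mulVec]
    rw [← h1, h0, Matrix.mulVec_zero]
  have key : star x ⬝ᵥ (gᵀ * g) *ᵥ x = (g *ᵥ x) ⬝ᵥ (g *ᵥ x) := by
    rw [← Matrix.mulVec_mulVec, Matrix.dotProduct_mulVec, star_trivial,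
      Matrix.vecMul_transpose]
  rw [key]
  exact dotProduct_self_pos hMx

lemma svals_nonneg (g : Matrix (Fin n) (Fin n) ℝ) (i : Fin n) : 0 ≤ svals g i :=
  Real.sqrt_nonneg _

lemma svals_pos (hg : g.det ≠ 0) (i : Fin n) : 0 < svals g i :=
  Real.sqrt_pos.mpr (eigsDesc_pos (posDef_transpose_mul_self hg) i)

lemma antitone_svals (g : Matrix (Fin n) (Fin n) ℝ) : Antitone (svals g) :=
  fun _ _ h => Real.sqrt_le_sqrt (antitone_eigsDesc (transpose_mul_self_isHermitian g) h)

lemma sq_svals (g : Matrix (Fin n) (Fin n) ℝ) (i : Fin n) :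
    svals g i ^ 2 = eigsDesc (gᵀ * g) i :=
  Real.sq_sqrt (eigsDesc_nonneg (transpose_mul_self_posSemidef g) i)

/-- partial product of singular values -/
noncomputable def svProd (g : Matrix (Fin n) (Fin n) ℝ) (k : ℕ) : ℝ :=
  ∏ i ∈ Finset.univ.filter (fun i : Fin n => (i : ℕ) < k), svals g i

lemma filter_lt_eq_map {k : ℕ} (hk : k ≤ n) :
    Finset.univ.filter (fun i : Fin n => (i : ℕ) < k)
      = Finset.map (Fin.castLEEmb hk) Finset.univ := by
  ext i
  simp only [Finset.mem_filter, Finset.mem_univ, true_and, Finset.mem_map,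
    Fin.castLEEmb_apply]
  constructor
  · intro h
    exact ⟨⟨i, h⟩, Fin.ext rfl⟩
  · rintro ⟨j, rfl⟩
    exact j.isLt

lemma svProd_eq {k : ℕ} (hk : k ≤ n) (g : Matrix (Fin n) (Fin n) ℝ) :
    svProd g k = ∏ j : Fin k, svals g (Fin.castLE hk j) := by
  rw [svProd, filter_lt_eq_map hk, Finset.prod_map]
  rfl

lemma svProd_pos (hg : g.det ≠ 0) (k : ℕ) : 0 < svProd g k :=
  Finset.prod_pos fun i _ => svals_pos hg i

lemma svProd_nonneg (g : Matrix (Fin n) (Fin n) ℝ) (k : ℕ) : 0 ≤ svProd g k :=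
  Finset.prod_nonneg fun i _ => svals_nonneg g i

/-- existence of isometries realising the top-k singular value product -/
lemma exists_isometries (M : Matrix (Fin n) (Fin n) ℝ) (hM : M.det ≠ 0)
    {k : ℕ} (hk : k ≤ n) :
    ∃ U V : Matrix (Fin n) (Fin k) ℝ, Uᵀ * U = 1 ∧ Vᵀ * V = 1 ∧
      (Uᵀ * M * V).det = svProd M k := by
  have hMM := posDef_transpose_mul_self hM
  obtain ⟨W, hW1, hW2, hWs⟩ := spectralDesc hMM.1
  have hμpos : ∀ i, 0 < eigsDesc (Mᵀ * M) i := fun i => eigsDesc_pos hMM i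
  have hσpos : ∀ i, 0 < svals M i := fun i => svals_pos hM i
  set e := Fin.castLE hk with he
  have heinj : Function.Injective e := Fin.castLE_injective hk
  set V := W.submatrix id e with hV
  have hVtV : Vᵀ * V = 1 := by
    have h0 := compress W hW1 (fun _ => (1:ℝ)) e heinj
    have hone : Matrix.diagonal (fun _ : Fin n => (1:ℝ)) = 1 := Matrix.diagonal_one
    rw [hone, Matrix.mul_one, hW2] at h0
    have hone' : Matrix.diagonal ((fun _ : Fin n => (1:ℝ)) ∘ e) = 1 := Matrix.diagonal_one
    rw [hone'] at h0
    rw [← h0, Matrix.mul_one]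
  have hVHV : Vᵀ * (Mᵀ * M) * V = Matrix.diagonal (eigsDesc (Mᵀ * M) ∘ e) := by
    conv_lhs => rw [hWs]
    exact compress W hW1 _ e heinj
  set σinv := fun j : Fin k => (svals M (e j))⁻¹ with hσinv
  set U := M * V * Matrix.diagonal σinv with hU
  have hUt : Uᵀ = Matrix.diagonal σinv * (Vᵀ * Mᵀ) := by
    rw [hU, Matrix.transpose_mul, Matrix.transpose_mul, Matrix.diagonal_transpose]
  have hμσ : ∀ j : Fin k, eigsDesc (Mᵀ * M) (e j) = svals M (e j) ^ 2 :=
    fun j => (sq_svals M (e j)).symm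
  have hUMV : Uᵀ * M * V = Matrix.diagonal (fun j => svals M (e j)) := by
    calc Uᵀ * M * V = (Matrix.diagonal σinv) * (Vᵀ * (Mᵀ * M) * V) := by
          rw [hUt]; simp only [Matrix.mul_assoc]
      _ = Matrix.diagonal σinv * Matrix.diagonal (eigsDesc (Mᵀ * M) ∘ e) := by rw [hVHV]
      _ = Matrix.diagonal (fun j => svals M (e j)) := by
          rw [Matrix.diagonal_mul_diagonal]
          refine congrArg Matrix.diagonal (funext fun j => ?_)
          rw [hσinv]
          simp only [Function.comp_apply]
          rw [hμσ j, sq]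
          have hne := ne_of_gt (hσpos (e j))
          field_simp
  have hUtU : Uᵀ * U = 1 := by
    calc Uᵀ * U = Matrix.diagonal σinv * (Vᵀ * (Mᵀ * M) * V) * Matrix.diagonal σinv := by
          rw [hUt, hU]; simp only [Matrix.mul_assoc]
      _ = Matrix.diagonal σinv * Matrix.diagonal (eigsDesc (Mᵀ * M) ∘ e) *
            Matrix.diagonal σinv := by rw [hVHV]
      _ = 1 := by
          rw [Matrix.diagonal_mul_diagonal, Matrix.diagonal_mul_diagonal]
          rw [show (fun j => σinv j * (eigsDesc (Mᵀ * M) ∘ e) j * σinv j)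
              = fun _ => (1:ℝ) from funext fun j => ?_, Matrix.diagonal_one]
          simp only [hσinv, Function.comp_apply]
          rw [hμσ j, sq]
          have hne := ne_of_gt (hσpos (e j))
          field_simp
  refine ⟨U, V, hUtU, hVtV, ?_⟩
  rw [hUMV, Matrix.det_diagonal, svProd_eq hk]

/-- the isometry-compression bound by the singular value product -/
lemma det_isometry_le (M : Matrix (Fin n) (Fin n) ℝ) (hM : M.det ≠ 0) {k : ℕ} (hk : k ≤ n)
    (X Y : Matrix (Fin n) (Fin k) ℝ) (hX : Xᵀ * X = 1) (hY : Yᵀ * Y = 1) :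
    |(Xᵀ * M * Y).det| ≤ svProd M k := by
  have hMM := posDef_transpose_mul_self hM
  obtain ⟨W, hW1, hW2, hWs⟩ := spectralDesc hMM.1
  have hσpos : ∀ i, 0 < svals M i := fun i => svals_pos hM i
  have hμσ : ∀ i, eigsDesc (Mᵀ * M) i = svals M i ^ 2 := fun i => (sq_svals M i).symm
  set Dinv := Matrix.diagonal (fun i : Fin n => (svals M i)⁻¹) with hDinv
  set P := M * W * Dinv with hP
  have hWHW : Wᵀ * (Mᵀ * M) * W = Matrix.diagonal (eigsDesc (Mᵀ * M)) := by
    conv_lhs => rw [hWs]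
    calc Wᵀ * (W * Matrix.diagonal (eigsDesc (Mᵀ * M)) * Wᵀ) * W
        = (Wᵀ * W) * Matrix.diagonal (eigsDesc (Mᵀ * M)) * (Wᵀ * W) := by
          simp only [Matrix.mul_assoc]
      _ = _ := by rw [hW1, Matrix.one_mul, Matrix.mul_one]
  have hPt : Pᵀ = Dinv * (Wᵀ * Mᵀ) := by
    rw [hP, Matrix.transpose_mul, Matrix.transpose_mul, hDinv, Matrix.diagonal_transpose]
  have hPtP : Pᵀ * P = 1 := by
    calc Pᵀ * P = Dinv * (Wᵀ * (Mᵀ * M) * W) * Dinv := by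
          rw [hPt, hP]; simp only [Matrix.mul_assoc]
      _ = Dinv * Matrix.diagonal (eigsDesc (Mᵀ * M)) * Dinv := by rw [hWHW]
      _ = 1 := by
          rw [hDinv, Matrix.diagonal_mul_diagonal, Matrix.diagonal_mul_diagonal]
          rw [show (fun i => (svals M i)⁻¹ * eigsDesc (Mᵀ * M) i * (svals M i)⁻¹)
              = fun _ => (1:ℝ) from funext fun i => ?_, Matrix.diagonal_one]
          rw [hμσ i, sq]
          have hne := ne_of_gt (hσpos i)
          field_simp
  have hMPW : M = P * Matrix.diagonal (svals M) * Wᵀ := by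
    rw [hP, hDinv]
    calc M = M * (W * Wᵀ) := by rw [hW2, Matrix.mul_one]
      _ = M * W * (Matrix.diagonal (fun i : Fin n => (svals M i)⁻¹) *
            Matrix.diagonal (svals M)) * Wᵀ := by
          rw [Matrix.diagonal_mul_diagonal]
          rw [show (fun i => (svals M i)⁻¹ * svals M i) = fun _ => (1:ℝ)
            from funext fun i => inv_mul_cancel₀ (ne_of_gt (hσpos i)), Matrix.diagonal_one]
          rw [Matrix.mul_one]
          simp only [Matrix.mul_assoc]
      _ = _ := by simp only [Matrix.mul_assoc]
  set X' := Pᵀ * X with hX'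
  set Y' := Wᵀ * Y with hY'
  have hXtX' : X'ᵀ * X' = 1 := by
    rw [hX', Matrix.transpose_mul, Matrix.transpose_transpose]
    calc Xᵀ * P * (Pᵀ * X) = Xᵀ * (P * Pᵀ) * X := by simp only [Matrix.mul_assoc]
      _ = 1 := by rw [mul_eq_one_comm.mp hPtP, Matrix.mul_one, hX]
  have hYtY' : Y'ᵀ * Y' = 1 := by
    rw [hY', Matrix.transpose_mul, Matrix.transpose_transpose]
    calc Yᵀ * W * (Wᵀ * Y) = Yᵀ * (W * Wᵀ) * Y := by simp only [Matrix.mul_assoc]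
      _ = 1 := by rw [hW2, Matrix.mul_one, hY]
  have heq : Xᵀ * M * Y = X'ᵀ * Matrix.diagonal (svals M) * Y' := by
    rw [hX', hY', Matrix.transpose_mul, Matrix.transpose_transpose]
    conv_lhs => rw [hMPW]
    simp only [Matrix.mul_assoc]
  rw [heq, svProd_eq hk]
  exact det_conj_diag_le (antitone_svals M) (svals_nonneg M) hk X' Y' hXtX' hYtY'

/-- **Horn's inequality**: submultiplicativity of partial products of singular values. -/
lemma svProd_mul_le (hA : A.det ≠ 0) (hB : B.det ≠ 0)
    {k : ℕ} (hk : k ≤ n) : svProd (A * B) k ≤ svProd A k * svProd B k := by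
  have hAB : (A * B).det ≠ 0 := by rw [Matrix.det_mul]; exact mul_ne_zero hA hB
  obtain ⟨U, V, hU, hV, hdet⟩ := exists_isometries (A * B) hAB hk
  set G := (B * V)ᵀ * (B * V) with hG
  have hGpos : G.PosDef := by
    rw [Matrix.posDef_iff_dotProduct_mulVec]
    constructor
    · have := Matrix.posSemidef_conjTranspose_mul_self (B * V)
      rw [Matrix.conjTranspose_eq_transpose_of_trivial] at this
      exact this.isHermitian
    · intro x hx
      have hBVx : (B * V) *ᵥ x ≠ 0 := by
        intro h0
        apply hx
        have hVx : V *ᵥ x = 0 := by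
          have h2 : B *ᵥ (V *ᵥ x) = 0 := by
            rw [Matrix.mulVec_mulVec]
            exact h0
          have h3 : B⁻¹ *ᵥ (B *ᵥ (V *ᵥ x)) = V *ᵥ x := by
            rw [Matrix.mulVec_mulVec, Matrix.nonsing_inv_mul _ (isUnit_iff_ne_zero.mpr hB),
              Matrix.one_mulVec]
          rw [← h3, h2, Matrix.mulVec_zero]
        have h4 : Vᵀ *ᵥ (V *ᵥ x) = x := by
          rw [Matrix.mulVec_mulVec, hV, Matrix.one_mulVec]
        rw [← h4, hVx, Matrix.mulVec_zero]
      have key : star x ⬝ᵥ ((B * V)ᵀ * (B * V)) *ᵥ x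
          = ((B * V) *ᵥ x) ⬝ᵥ ((B * V) *ᵥ x) := by
        rw [← Matrix.mulVec_mulVec, Matrix.dotProduct_mulVec, star_trivial,
          Matrix.vecMul_transpose]
      rw [hG, key]
      exact dotProduct_self_pos hBVx
  have hGherm := hGpos.1
  have hmm : ∀ s t : ℝ, mpow G s * mpow G t = mpow G (s + t) := mpow_mul_mpow hGpos
  set Q := B * V * mpow G (-(1/2)) with hQ
  have hQt : Qᵀ = mpow G (-(1/2)) * (B * V)ᵀ := by
    rw [hQ, Matrix.transpose_mul, mpow_transpose hGherm]
  have hQBV : Qᵀ * (B * V) = mpow G (1/2) := by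
    calc Qᵀ * (B * V) = mpow G (-(1/2)) * G := by
          rw [hQt, hG, Matrix.mul_assoc]
      _ = mpow G (-(1/2)) * mpow G 1 := by rw [mpow_one hGherm]
      _ = mpow G (1/2) := by rw [hmm, show (-(1/2) : ℝ) + 1 = 1/2 by norm_num]
  have hQtQ : Qᵀ * Q = 1 := by
    calc Qᵀ * Q = (Qᵀ * (B * V)) * mpow G (-(1/2)) := by
          rw [hQ]; simp only [Matrix.mul_assoc]
      _ = mpow G (1/2) * mpow G (-(1/2)) := by rw [hQBV]
      _ = 1 := by rw [hmm, show (1/2 : ℝ) + -(1/2) = 0 by norm_num, mpow_zero hGherm]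
  have hsplit : Uᵀ * (A * B) * V = (Uᵀ * A * Q) * (Qᵀ * (B * V)) := by
    symm
    calc (Uᵀ * A * Q) * (Qᵀ * (B * V))
        = Uᵀ * (A * (B * (V * (mpow G (-(1/2)) * mpow G (1/2))))) := by
          rw [hQBV, hQ]; simp only [Matrix.mul_assoc]
      _ = Uᵀ * (A * B) * V := by
          rw [hmm, show (-(1/2) : ℝ) + 1/2 = 0 by norm_num, mpow_zero hGherm,
            Matrix.mul_one]
          simp only [Matrix.mul_assoc]
  have h1 : svProd (A * B) k ≤ |(Uᵀ * A * Q).det| * |(Qᵀ * (B * V)).det| := by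
    rw [← hdet, hsplit, Matrix.det_mul, ← abs_mul]
    exact le_abs_self _
  have h2 : |(Uᵀ * A * Q).det| ≤ svProd A k := det_isometry_le A hA hk U Q hU hQtQ
  have h3 : |(Qᵀ * (B * V)).det| ≤ svProd B k := by
    have h4 := det_isometry_le B hB hk Q V hQtQ hV
    rw [Matrix.mul_assoc] at h4
    exact h4
  exact h1.trans (mul_le_mul h2 h3 (abs_nonneg _) (svProd_nonneg A k))

lemma filter_lt_self : Finset.univ.filter (fun i : Fin n => (i:ℕ) < n) = Finset.univ :=
  Finset.filter_true_of_mem fun i _ => i.isLt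

lemma svProd_univ (g : Matrix (Fin n) (Fin n) ℝ) : svProd g n = |g.det| := by
  have h2 : svProd g n ^ 2 = g.det ^ 2 := by
    rw [svProd, filter_lt_self, ← Finset.prod_pow]
    calc ∏ i, svals g i ^ 2 = ∏ i, eigsDesc (gᵀ * g) i :=
          Finset.prod_congr rfl fun i _ => sq_svals g i
      _ = (gᵀ * g).det := (det_eq_prod_eigsDesc (transpose_mul_self_isHermitian g)).symm
      _ = g.det ^ 2 := by rw [Matrix.det_mul, Matrix.det_transpose, sq]
  calc svProd g n = |svProd g n| := (abs_of_nonneg (svProd_nonneg g n)).symm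
    _ = Real.sqrt (svProd g n ^ 2) := (Real.sqrt_sq_eq_abs _).symm
    _ = Real.sqrt (g.det ^ 2) := by rw [h2]
    _ = |g.det| := Real.sqrt_sq_eq_abs _

lemma psum_two_logb (g : Matrix (Fin n) (Fin n) ℝ) (hg : g.det ≠ 0) (k : ℕ) :
    psum (fun i => 2 * Real.logb 2 (svals g i)) k = 2 * Real.logb 2 (svProd g k) := by
  rw [psum, svProd, Real.logb_prod _ _ (fun i _ => ne_of_gt (svals_pos hg i)),
    Finset.mul_sum]

end SVAux
end Aux3


/-- The triangle inequality for the vectorial distance with respect to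
the majorization order: `d⃗(p,q) ⪯ d⃗(p,r) + d⃗(r,q)`. -/
theorem statement8 {n : ℕ} (p q r : Matrix (Fin n) (Fin n) ℝ)
    (hp : p.PosDef) (hq : q.PosDef) (hr : r.PosDef) :
    maj (vecd p q) (fun i => vecd p r i + vecd r q i) := by
  have h2lt : (1:ℝ) < 2 := one_lt_two
  have hdApq : (mpow p (-(1/2)) * mpow q (1/2)).det ≠ 0 := by
    rw [Matrix.det_mul]
    exact mul_ne_zero (ne_of_gt (SVAux.mpow_posDef hp (-(1/2))).det_pos)
      (ne_of_gt (SVAux.mpow_posDef hq (1/2)).det_pos)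
  have hdApr : (mpow p (-(1/2)) * mpow r (1/2)).det ≠ 0 := by
    rw [Matrix.det_mul]
    exact mul_ne_zero (ne_of_gt (SVAux.mpow_posDef hp (-(1/2))).det_pos)
      (ne_of_gt (SVAux.mpow_posDef hr (1/2)).det_pos)
  have hdArq : (mpow r (-(1/2)) * mpow q (1/2)).det ≠ 0 := by
    rw [Matrix.det_mul]
    exact mul_ne_zero (ne_of_gt (SVAux.mpow_posDef hr (-(1/2))).det_pos)
      (ne_of_gt (SVAux.mpow_posDef hq (1/2)).det_pos)
  have hcomp : (mpow p (-(1/2)) * mpow r (1/2)) * (mpow r (-(1/2)) * mpow q (1/2))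
      = mpow p (-(1/2)) * mpow q (1/2) := by
    calc (mpow p (-(1/2)) * mpow r (1/2)) * (mpow r (-(1/2)) * mpow q (1/2))
        = mpow p (-(1/2)) * ((mpow r (1/2) * mpow r (-(1/2))) * mpow q (1/2)) := by
          simp only [Matrix.mul_assoc]
      _ = mpow p (-(1/2)) * mpow q (1/2) := by
          rw [SVAux.mpow_mul_mpow hr, show (1/2 : ℝ) + -(1/2) = 0 by norm_num,
            SVAux.mpow_zero hr.1, Matrix.one_mul]
  have hvecd : ∀ (a b : Matrix (Fin n) (Fin n) ℝ) (k : ℕ),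
      psum (vecd a b) k = psum (fun i =>
        2 * Real.logb 2 (svals (mpow a (-(1/2)) * mpow b (1/2)) i)) k := by
    intro a b k
    rfl
  constructor
  · intro k hkn
    have hk : k ≤ n := le_of_lt hkn
    have hsplit : psum (fun i => vecd p r i + vecd r q i) k
        = psum (vecd p r) k + psum (vecd r q) k := by
      rw [psum, psum, psum, ← Finset.sum_add_distrib]
    rw [hsplit, hvecd p q, hvecd p r, hvecd r q,
      SVAux.psum_two_logb _ hdApq, SVAux.psum_two_logb _ hdApr, SVAux.psum_two_logb _ hdArq]
    have hmulle : SVAux.svProd (mpow p (-(1/2)) * mpow q (1/2)) k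
        ≤ SVAux.svProd (mpow p (-(1/2)) * mpow r (1/2)) k *
          SVAux.svProd (mpow r (-(1/2)) * mpow q (1/2)) k := by
      rw [← hcomp]
      exact SVAux.svProd_mul_le hdApr hdArq hk
    have hlog := Real.logb_le_logb_of_le h2lt (SVAux.svProd_pos hdApq k) hmulle
    rw [Real.logb_mul (ne_of_gt (SVAux.svProd_pos hdApr k))
      (ne_of_gt (SVAux.svProd_pos hdArq k))] at hlog
    linarith
  · have hsplit : psum (fun i => vecd p r i + vecd r q i) n
        = psum (vecd p r) n + psum (vecd r q) n := by
      rw [psum, psum, psum, ← Finset.sum_add_distrib]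
    rw [hsplit, hvecd p q, hvecd p r, hvecd r q,
      SVAux.psum_two_logb _ hdApq, SVAux.psum_two_logb _ hdApr, SVAux.psum_two_logb _ hdArq,
      SVAux.svProd_univ, SVAux.svProd_univ, SVAux.svProd_univ]
    have hdet : |(mpow p (-(1/2)) * mpow q (1/2)).det|
        = |(mpow p (-(1/2)) * mpow r (1/2)).det| * |(mpow r (-(1/2)) * mpow q (1/2)).det| := by
      rw [← abs_mul, ← Matrix.det_mul, hcomp]
    rw [hdet, Real.logb_mul (abs_ne_zero.mpr hdApr) (abs_ne_zero.mpr hdArq)]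
    ring
end
end

section
/- Let g : ℝ → GL(n,ℝ) be C¹ with g(0) = I and g′(0) = H. Then the vector σ⃗(g(t)) of base-2 logarithms of singular values of g(t) (in nonincreasing order) has a right derivative at t = 0 equal to (1/(2 ln 2)) (λ₁(H + Hᵀ), …, λₙ(H + Hᵀ)), where λᵢ denotes the i-th largest eigenvalue. -/
open Matrix

noncomputable section

variable {n : ℕ}

attribute [local instance] Matrix.normedAddCommGroup Matrix.normedSpace

namespace Aux14

variable {X Y : Matrix (Fin n) (Fin n) ℝ}


/-- multiset of a tuple is invariant under permutation -/
lemma multiset_map_comp_perm (f : Fin n → ℝ) (σ : Equiv.Perm (Fin n)) :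
    Multiset.map (f ∘ σ) Finset.univ.val = Multiset.map f Finset.univ.val := by
  have h1 : Multiset.map (⇑σ) Finset.univ.val = Finset.univ.val := by
    have := Finset.map_univ_equiv (σ : Fin n ≃ Fin n)
    calc Multiset.map (⇑σ) Finset.univ.val
        = (Finset.univ.map (σ : Fin n ≃ Fin n).toEmbedding).val := rfl
      _ = Finset.univ.val := by rw [this]
  calc Multiset.map (f ∘ σ) Finset.univ.val
      = Multiset.map f (Multiset.map (⇑σ) Finset.univ.val) := by
        rw [Multiset.map_map]
    _ = Multiset.map f Finset.univ.val := by rw [h1]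

lemma ofFn_coe_eq (f : Fin n → ℝ) :
    (↑(List.ofFn f) : Multiset ℝ) = Multiset.map f Finset.univ.val := by
  rw [List.ofFn_eq_map]
  rfl

/-- two monotone tuples with the same multiset of values are equal -/
lemma monotone_tuple_eq {f g : Fin n → ℝ} (hf : Monotone f) (hg : Monotone g)
    (h : Multiset.map f Finset.univ.val = Multiset.map g Finset.univ.val) : f = g := by
  apply List.ofFn_injective
  apply List.Perm.eq_of_sortedLE hf.sortedLE_ofFn hg.sortedLE_ofFn ?_
  rw [← Multiset.coe_eq_coe, ofFn_coe_eq, ofFn_coe_eq, h]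

/-- pointwise equality of products gives multiset equality -/
lemma multiset_eq_of_prod_eq {f g : Fin n → ℝ}
    (h : ∀ r : ℝ, ∏ i, (r - f i) = ∏ i, (r - g i)) :
    Multiset.map f Finset.univ.val = Multiset.map g Finset.univ.val := by
  have key : ((Multiset.map f Finset.univ.val).map
        fun a => Polynomial.X - Polynomial.C a).prod
      = ((Multiset.map g Finset.univ.val).map
        fun a => Polynomial.X - Polynomial.C a).prod := by
    apply Polynomial.funext
    intro r
    have e : ∀ u : Fin n → ℝ,
        Polynomial.eval r ((Multiset.map u Finset.univ.val).map
          fun a => Polynomial.X - Polynomial.C a).prod = ∏ i, (r - u i) := by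
      intro u
      rw [Polynomial.eval_multiset_prod, Multiset.map_map, Multiset.map_map]
      simp [Finset.prod]
    rw [e, e, h r]
  have := congrArg Polynomial.roots key
  rwa [Polynomial.roots_multiset_prod_X_sub_C, Polynomial.roots_multiset_prod_X_sub_C] at this

lemma det_conj_diag (V : Matrix.unitaryGroup (Fin n) ℝ) (d : Fin n → ℝ) (r : ℝ) :
    Matrix.det (r • (1 : Matrix (Fin n) (Fin n) ℝ)
      - (V : Matrix (Fin n) (Fin n) ℝ) * Matrix.diagonal d * star (V : Matrix (Fin n) (Fin n) ℝ))
     = ∏ i, (r - d i) := by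
  have hVV : (V : Matrix (Fin n) (Fin n) ℝ) * star (V : Matrix (Fin n) (Fin n) ℝ) = 1 :=
    Matrix.mem_unitaryGroup_iff.mp V.2
  have hVV' : star (V : Matrix (Fin n) (Fin n) ℝ) * (V : Matrix (Fin n) (Fin n) ℝ) = 1 :=
    Matrix.mem_unitaryGroup_iff'.mp V.2
  have key : r • (1 : Matrix (Fin n) (Fin n) ℝ)
      - (V : Matrix (Fin n) (Fin n) ℝ) * Matrix.diagonal d * star (V : Matrix (Fin n) (Fin n) ℝ)
      = (V : Matrix (Fin n) (Fin n) ℝ) * Matrix.diagonal (fun i => r - d i)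
        * star (V : Matrix (Fin n) (Fin n) ℝ) := by
    have : Matrix.diagonal (fun i => r - d i)
        = r • (1 : Matrix (Fin n) (Fin n) ℝ) - Matrix.diagonal d := by
      rw [Matrix.smul_one_eq_diagonal, ← Matrix.diagonal_sub]
    rw [this, Matrix.mul_sub, Matrix.sub_mul, Matrix.mul_smul, Matrix.smul_mul, Matrix.mul_one,
      hVV]
  rw [key, Matrix.det_mul, Matrix.det_mul, Matrix.det_diagonal]
  have : Matrix.det (V : Matrix (Fin n) (Fin n) ℝ)
      * Matrix.det (star (V : Matrix (Fin n) (Fin n) ℝ)) = 1 := by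
    rw [← Matrix.det_mul, hVV, Matrix.det_one]
  calc Matrix.det (V : Matrix (Fin n) (Fin n) ℝ) * (∏ i, (r - d i))
        * Matrix.det (star (V : Matrix (Fin n) (Fin n) ℝ))
      = (Matrix.det (V : Matrix (Fin n) (Fin n) ℝ)
        * Matrix.det (star (V : Matrix (Fin n) (Fin n) ℝ))) * (∏ i, (r - d i)) := by ring
    _ = ∏ i, (r - d i) := by rw [this, one_mul]

/-- any unitary diagonalization determines the sorted eigenvalues -/
lemma sorted_of_decomp {M : Matrix (Fin n) (Fin n) ℝ} (hM : M.IsHermitian)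
    (V : Matrix.unitaryGroup (Fin n) ℝ) (d : Fin n → ℝ)
    (h : M = (V : Matrix (Fin n) (Fin n) ℝ) * Matrix.diagonal d
      * star (V : Matrix (Fin n) (Fin n) ℝ)) :
    hM.eigenvalues ∘ Tuple.sort hM.eigenvalues = d ∘ Tuple.sort d := by
  have hdec : M = (hM.eigenvectorUnitary : Matrix (Fin n) (Fin n) ℝ)
      * Matrix.diagonal hM.eigenvalues * star (hM.eigenvectorUnitary : Matrix (Fin n) (Fin n) ℝ) := by
    have := hM.spectral_theorem
    simpa using this
  have hprod : ∀ r : ℝ, ∏ i, (r - hM.eigenvalues i) = ∏ i, (r - d i) := by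
    intro r
    rw [← det_conj_diag hM.eigenvectorUnitary hM.eigenvalues r, ← hdec, h,
      det_conj_diag V d r]
  have hmul := multiset_eq_of_prod_eq hprod
  apply monotone_tuple_eq (Tuple.monotone_sort _) (Tuple.monotone_sort _)
  rw [multiset_map_comp_perm, multiset_map_comp_perm, hmul]

lemma eigsDesc_of_herm {M : Matrix (Fin n) (Fin n) ℝ} (hM : M.IsHermitian) :
    eigsDesc M = fun i => hM.eigenvalues (Tuple.sort hM.eigenvalues i.rev) := by
  simp only [eigsDesc, dif_pos hM]

variable {X : Matrix (Fin n) (Fin n) ℝ}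

/-- permutation sorting the eigenvalues in descending order -/
noncomputable def dperm (hX : X.IsHermitian) : Equiv.Perm (Fin n) :=
  (Fin.revPerm).trans (Tuple.sort hX.eigenvalues)

/-- the orthonormal eigenbasis, reordered so eigenvalues are descending -/
noncomputable def w (hX : X.IsHermitian) : OrthonormalBasis (Fin n) ℝ (EuclideanSpace ℝ (Fin n)) :=
  hX.eigenvectorBasis.reindex (dperm hX).symm

lemma w_apply (hX : X.IsHermitian) (i : Fin n) :
    w hX i = hX.eigenvectorBasis (dperm hX i) := by
  simp [w, OrthonormalBasis.reindex_apply]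

lemma eigsDesc_eq (hX : X.IsHermitian) (i : Fin n) :
    eigsDesc X i = hX.eigenvalues (dperm hX i) := by
  rw [eigsDesc_of_herm hX]
  simp [dperm, Equiv.trans_apply]

lemma eigsDesc_antitone (hX : X.IsHermitian) : Antitone (eigsDesc X) := by
  intro i j hij
  rw [eigsDesc_of_herm hX]
  simp only
  have : j.rev ≤ i.rev := Fin.rev_le_rev.mpr hij
  exact Tuple.monotone_sort hX.eigenvalues this

lemma toEuclideanLin_w (hX : X.IsHermitian) (i : Fin n) :
    Matrix.toEuclideanLin X (w hX i) = eigsDesc X i • w hX i := by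
  rw [w_apply, eigsDesc_eq]
  have h1 := hX.mulVec_eigenvectorBasis (dperm hX i)
  apply PiLp.ext
  intro j
  exact congrFun h1 j

lemma repr_toEuclideanLin (hX : X.IsHermitian) (y : EuclideanSpace ℝ (Fin n)) (j : Fin n) :
    (w hX).repr (Matrix.toEuclideanLin X y) j = eigsDesc X j * (w hX).repr y j := by
  rw [OrthonormalBasis.repr_apply_apply, OrthonormalBasis.repr_apply_apply]
  have hsym := (Matrix.isHermitian_iff_isSymmetric.mp hX)
  rw [← hsym (w hX j) y, toEuclideanLin_w, real_inner_smul_left]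

lemma inner_eq_sum_repr (b : OrthonormalBasis (Fin n) ℝ (EuclideanSpace ℝ (Fin n)))
    (x y : EuclideanSpace ℝ (Fin n)) :
    inner ℝ x y = ∑ j, (b.repr x j) * (b.repr y j) := by
  rw [← b.repr.inner_map_map x y, PiLp.inner_apply]
  simp only [RCLike.inner_apply, conj_trivial]
  exact Finset.sum_congr rfl (fun j _ => mul_comm _ _)

lemma quadform_eq (hX : X.IsHermitian) (y : EuclideanSpace ℝ (Fin n)) :
    (inner ℝ y (Matrix.toEuclideanLin X y) : ℝ) = ∑ j, eigsDesc X j * ((w hX).repr y j)^2 := by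
  rw [inner_eq_sum_repr (w hX)]
  congr 1
  funext j
  rw [repr_toEuclideanLin hX]
  ring

lemma norm_sq_eq_sum_repr (b : OrthonormalBasis (Fin n) ℝ (EuclideanSpace ℝ (Fin n)))
    (y : EuclideanSpace ℝ (Fin n)) :
    ‖y‖^2 = ∑ j, (b.repr y j)^2 := by
  rw [← real_inner_self_eq_norm_sq, inner_eq_sum_repr b]
  congr 1
  funext j
  ring

lemma repr_eq_zero_of_mem_span (hX : X.IsHermitian) {S : Set (Fin n)}
    {y : EuclideanSpace ℝ (Fin n)} (hy : y ∈ Submodule.span ℝ (w hX '' S))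
    {j : Fin n} (hj : j ∉ S) : (w hX).repr y j = 0 := by
  rw [OrthonormalBasis.repr_apply_apply]
  induction hy using Submodule.span_induction with
  | mem v hv =>
    obtain ⟨k, hk, rfl⟩ := hv
    exact (w hX).orthonormal.2 (fun h => hj (h ▸ hk))
  | zero => exact inner_zero_right _
  | add u v _ _ hu hv => rw [inner_add_right, hu, hv, add_zero]
  | smul c u _ hu => rw [real_inner_smul_right, hu, mul_zero]

lemma le_quadform (hX : X.IsHermitian) {S : Set (Fin n)} {c : ℝ}
    (hc : ∀ j ∈ S, c ≤ eigsDesc X j) {y : EuclideanSpace ℝ (Fin n)}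
    (hy : y ∈ Submodule.span ℝ (w hX '' S)) (hn : ‖y‖ = 1) :
    c ≤ (inner ℝ y (Matrix.toEuclideanLin X y) : ℝ) := by
  rw [quadform_eq hX]
  have h1 : ∑ j, ((w hX).repr y j)^2 = 1 := by
    rw [← norm_sq_eq_sum_repr (w hX), hn]; norm_num
  calc c = ∑ j, c * ((w hX).repr y j)^2 := by rw [← Finset.mul_sum, h1, mul_one]
    _ ≤ ∑ j, eigsDesc X j * ((w hX).repr y j)^2 := by
        apply Finset.sum_le_sum
        intro j _
        by_cases hjS : j ∈ S
        · exact mul_le_mul_of_nonneg_right (hc j hjS) (sq_nonneg _)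
        · rw [repr_eq_zero_of_mem_span hX hy hjS]
          simp

lemma quadform_le (hX : X.IsHermitian) {S : Set (Fin n)} {c : ℝ}
    (hc : ∀ j ∈ S, eigsDesc X j ≤ c) {y : EuclideanSpace ℝ (Fin n)}
    (hy : y ∈ Submodule.span ℝ (w hX '' S)) (hn : ‖y‖ = 1) :
    (inner ℝ y (Matrix.toEuclideanLin X y) : ℝ) ≤ c := by
  rw [quadform_eq hX]
  have h1 : ∑ j, ((w hX).repr y j)^2 = 1 := by
    rw [← norm_sq_eq_sum_repr (w hX), hn]; norm_num
  calc ∑ j, eigsDesc X j * ((w hX).repr y j)^2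
      ≤ ∑ j, c * ((w hX).repr y j)^2 := by
        apply Finset.sum_le_sum
        intro j _
        by_cases hjS : j ∈ S
        · exact mul_le_mul_of_nonneg_right (hc j hjS) (sq_nonneg _)
        · rw [repr_eq_zero_of_mem_span hX hy hjS]
          simp
    _ = c := by rw [← Finset.mul_sum, h1, mul_one]

lemma finrank_span_w (hX : X.IsHermitian) (S : Set (Fin n)) [Fintype S] :
    Module.finrank ℝ (Submodule.span ℝ (w hX '' S)) = Fintype.card S := by
  rw [Set.image_eq_range]
  exact finrank_span_eq_card
    (((w hX).orthonormal.comp Subtype.val Subtype.val_injective).linearIndependent)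

-- now the real content
lemma exists_common_unit (hY : Y.IsHermitian) (hX : X.IsHermitian) (i : Fin n) :
    ∃ y : EuclideanSpace ℝ (Fin n), ‖y‖ = 1 ∧
      y ∈ Submodule.span ℝ (w hY '' {j | j ≤ i}) ∧
      y ∈ Submodule.span ℝ (w hX '' {j | i ≤ j}) := by
  set V := Submodule.span ℝ (w hY '' {j | j ≤ i}) with hV
  set W := Submodule.span ℝ (w hX '' {j | i ≤ j}) with hW
  have hVr : Module.finrank ℝ V = (i : ℕ) + 1 := by
    rw [hV, finrank_span_w]
    rw [Fintype.card_subtype]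
    have : Finset.filter (fun j => j ∈ {j : Fin n | j ≤ i}) Finset.univ = Finset.Iic i := by
      ext j; simp
    rw [this, Fin.card_Iic]
  have hWr : Module.finrank ℝ W = n - (i : ℕ) := by
    rw [hW, finrank_span_w]
    rw [Fintype.card_subtype]
    have : Finset.filter (fun j => j ∈ {j : Fin n | i ≤ j}) Finset.univ = Finset.Ici i := by
      ext j; simp
    rw [this, Fin.card_Ici]
  have hsum := Submodule.finrank_sup_add_finrank_inf_eq V W
  have hle : Module.finrank ℝ ↥(V ⊔ W) ≤ n := by
    have := Submodule.finrank_le (V ⊔ W)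
    simpa [finrank_euclideanSpace] using this
  have hpos : 0 < Module.finrank ℝ ↥(V ⊓ W) := by
    have hi := i.isLt
    omega
  obtain ⟨v, hv0⟩ := Module.finrank_pos_iff_exists_ne_zero.mp hpos
  refine ⟨‖(v : EuclideanSpace ℝ (Fin n))‖⁻¹ • (v : EuclideanSpace ℝ (Fin n)), ?_, ?_, ?_⟩
  · have hvne : ‖(v : EuclideanSpace ℝ (Fin n))‖ ≠ 0 := by
      simpa using (fun h => hv0 (Subtype.ext h))
    rw [norm_smul, norm_inv, norm_norm, inv_mul_cancel₀ hvne]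
  · exact Submodule.smul_mem _ _ (Submodule.mem_inf.mp v.2).1
  · exact Submodule.smul_mem _ _ (Submodule.mem_inf.mp v.2).2


lemma coord_abs_le_one {y : EuclideanSpace ℝ (Fin n)} (hn : ‖y‖ = 1) (j : Fin n) :
    |y j| ≤ 1 := by
  rw [← sq_le_one_iff_abs_le_one]
  have h1 : ∑ k, (y k)^2 = 1 := by
    have := EuclideanSpace.norm_eq y
    rw [hn] at this
    have h2 : Real.sqrt (∑ k, ‖y k‖^2) = 1 := this.symm
    have h3 := congrArg (fun x => x^2) h2
    simp only [one_pow] at h3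
    rw [Real.sq_sqrt (by positivity)] at h3
    simpa [Real.norm_eq_abs, sq_abs] using h3
  calc (y j)^2 ≤ ∑ k, (y k)^2 :=
        Finset.single_le_sum (fun k _ => sq_nonneg (y k)) (Finset.mem_univ j)
    _ = 1 := h1

lemma quad_bound (E : Matrix (Fin n) (Fin n) ℝ) {y : EuclideanSpace ℝ (Fin n)}
    (hn : ‖y‖ = 1) :
    |(inner ℝ y (Matrix.toEuclideanLin E y) : ℝ)| ≤ (n : ℝ)^2 * ‖E‖ := by
  have hcoord := coord_abs_le_one hn
  have hE : ∀ i j, |E i j| ≤ ‖E‖ := fun i j => E.norm_entry_le_entrywise_sup_norm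
  have hEnn : 0 ≤ ‖E‖ := norm_nonneg _
  have hinner : (inner ℝ y (Matrix.toEuclideanLin E y) : ℝ)
      = ∑ i, y i * ∑ j, E i j * y j := by
    rw [PiLp.inner_apply]
    simp only [RCLike.inner_apply, conj_trivial]
    refine Finset.sum_congr rfl (fun i _ => ?_)
    rw [mul_comm]
    rfl
  rw [hinner]
  calc |∑ i, y i * ∑ j, E i j * y j| ≤ ∑ i, |y i * ∑ j, E i j * y j| :=
        Finset.abs_sum_le_sum_abs _ _
    _ ≤ ∑ _i : Fin n, (n : ℝ) * ‖E‖ := by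
        apply Finset.sum_le_sum
        intro i _
        rw [abs_mul]
        calc |y i| * |∑ j, E i j * y j| ≤ 1 * |∑ j, E i j * y j| := by
              apply mul_le_mul_of_nonneg_right (hcoord i) (abs_nonneg _)
          _ = |∑ j, E i j * y j| := one_mul _
          _ ≤ ∑ j, |E i j * y j| := Finset.abs_sum_le_sum_abs _ _
          _ ≤ ∑ _j : Fin n, ‖E‖ := by
              apply Finset.sum_le_sum
              intro j _
              rw [abs_mul]
              calc |E i j| * |y j| ≤ ‖E‖ * 1 :=
                    mul_le_mul (hE i j) (hcoord j) (abs_nonneg _) hEnn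
                _ = ‖E‖ := mul_one _
          _ = (n : ℝ) * ‖E‖ := by
              rw [Finset.sum_const, Finset.card_univ, Fintype.card_fin, nsmul_eq_mul]
    _ = (n : ℝ)^2 * ‖E‖ := by
        rw [Finset.sum_const, Finset.card_univ, Fintype.card_fin, nsmul_eq_mul]
        ring

/-- one-sided Weyl inequality -/
lemma weyl_le (hY : Y.IsHermitian) (hX : X.IsHermitian) (i : Fin n) :
    eigsDesc Y i ≤ eigsDesc X i + (n : ℝ)^2 * ‖Y - X‖ := by
  obtain ⟨y, hn, hVY, hVX⟩ := exists_common_unit hY hX i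
  have h1 : eigsDesc Y i ≤ (inner ℝ y (Matrix.toEuclideanLin Y y) : ℝ) :=
    le_quadform hY (fun j hj => eigsDesc_antitone hY hj) hVY hn
  have h2 : (inner ℝ y (Matrix.toEuclideanLin X y) : ℝ) ≤ eigsDesc X i :=
    quadform_le hX (fun j hj => eigsDesc_antitone hX hj) hVX hn
  have h3 : (inner ℝ y (Matrix.toEuclideanLin Y y) : ℝ)
      - (inner ℝ y (Matrix.toEuclideanLin X y) : ℝ)
      = (inner ℝ y (Matrix.toEuclideanLin (Y - X) y) : ℝ) := by
    rw [map_sub]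
    simp only [LinearMap.sub_apply]
    rw [inner_sub_right]
  have h4 := (abs_le.mp (quad_bound (Y - X) hn)).2
  linarith

/-- two-sided Weyl inequality -/
lemma weyl_abs (hY : Y.IsHermitian) (hX : X.IsHermitian) (i : Fin n) :
    |eigsDesc Y i - eigsDesc X i| ≤ (n : ℝ)^2 * ‖Y - X‖ := by
  rw [abs_sub_le_iff]
  constructor
  · have := weyl_le hY hX i
    linarith
  · have := weyl_le hX hY i
    rw [norm_sub_rev] at this
    linarith

/-- sorted eigenvalues of `1 + t • B` for `t ≥ 0` -/
lemma eigsDesc_one_add_smul {B : Matrix (Fin n) (Fin n) ℝ} (hB : B.IsHermitian)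
    {t : ℝ} (ht : 0 ≤ t) :
    eigsDesc (1 + t • B) = fun i => 1 + t * eigsDesc B i := by
  set d : Fin n → ℝ := fun i => 1 + t * hB.eigenvalues i with hd
  have hdecB : B = (hB.eigenvectorUnitary : Matrix (Fin n) (Fin n) ℝ)
      * Matrix.diagonal hB.eigenvalues
      * star (hB.eigenvectorUnitary : Matrix (Fin n) (Fin n) ℝ) := by
    simpa using hB.spectral_theorem
  have hVV : (hB.eigenvectorUnitary : Matrix (Fin n) (Fin n) ℝ)
      * star (hB.eigenvectorUnitary : Matrix (Fin n) (Fin n) ℝ) = 1 :=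
    Matrix.mem_unitaryGroup_iff.mp hB.eigenvectorUnitary.2
  have hdec : 1 + t • B = (hB.eigenvectorUnitary : Matrix (Fin n) (Fin n) ℝ)
      * Matrix.diagonal d
      * star (hB.eigenvectorUnitary : Matrix (Fin n) (Fin n) ℝ) := by
    have h1 : Matrix.diagonal d = 1 + t • Matrix.diagonal hB.eigenvalues := by
      rw [hd, ← Matrix.diagonal_one, ← Matrix.diagonal_smul, ← Matrix.diagonal_add]
      congr 1
    rw [h1, Matrix.mul_add, Matrix.add_mul, Matrix.mul_one, hVV, Matrix.mul_smul,
      Matrix.smul_mul, ← hdecB]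
  have hherm : (1 + t • B).IsHermitian := by
    rw [hdec]
    exact Matrix.isHermitian_mul_mul_conjTranspose _ (Matrix.isHermitian_diagonal _)
  have hs := sorted_of_decomp hherm hB.eigenvectorUnitary d hdec
  have hds : d ∘ Tuple.sort d = d ∘ Tuple.sort hB.eigenvalues := by
    symm
    rw [Tuple.comp_sort_eq_comp_iff_monotone]
    intro a b hab
    simp only [hd, Function.comp_apply]
    have := Tuple.monotone_sort hB.eigenvalues hab
    simp only [Function.comp_apply] at this
    have h2 := mul_le_mul_of_nonneg_left this ht
    linarith
  funext i
  rw [eigsDesc_of_herm hherm, eigsDesc_of_herm hB]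
  simp only
  have := congrFun hs i.rev
  simp only [Function.comp_apply] at this
  rw [this]
  have := congrFun hds i.rev
  simp only [Function.comp_apply] at this
  rw [this]

-- transpose-mul-self is hermitian over ℝ
lemma herm_tmul (M : Matrix (Fin n) (Fin n) ℝ) : (Mᵀ * M).IsHermitian := by
  have := Matrix.isHermitian_conjTranspose_mul_self M
  rwa [Matrix.conjTranspose_eq_transpose_of_trivial] at this

lemma eigsDesc_pos_of_unit {M : Matrix (Fin n) (Fin n) ℝ} (hM : IsUnit M) (i : Fin n) :
    0 < eigsDesc (Mᵀ * M) i := by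
  have hherm := herm_tmul M
  have hnonneg : ∀ j, 0 ≤ hherm.eigenvalues j := by
    have hps : (Mᵀ * M).PosSemidef := by
      have := Matrix.posSemidef_conjTranspose_mul_self M
      rwa [Matrix.conjTranspose_eq_transpose_of_trivial] at this
    exact fun j => hps.eigenvalues_nonneg j
  have hdet : (Mᵀ * M).det ≠ 0 := by
    rw [Matrix.det_mul, Matrix.det_transpose]
    have : IsUnit M.det := (Matrix.isUnit_iff_isUnit_det M).mp hM
    exact mul_ne_zero this.ne_zero this.ne_zero
  have hprod : ∏ j, hherm.eigenvalues j ≠ 0 := by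
    have := hherm.det_eq_prod_eigenvalues
    rw [this] at hdet
    simpa using hdet
  have hne : ∀ j, hherm.eigenvalues j ≠ 0 := by
    intro j
    exact Finset.prod_ne_zero_iff.mp hprod j (Finset.mem_univ j)
  rw [eigsDesc_of_herm hherm]
  exact lt_of_le_of_ne (hnonneg _) (Ne.symm (hne _))


lemma herm_one_add_smul (t : ℝ) {B : Matrix (Fin n) (Fin n) ℝ} (hB : B.IsHermitian) :
    (1 + t • B).IsHermitian := by
  show (1 + t • B)ᴴ = 1 + t • B
  rw [Matrix.conjTranspose_add, Matrix.conjTranspose_smul, Matrix.conjTranspose_one, hB.eq]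
  simp

end Aux14

open Aux14


/-- For a `C¹` curve `g : ℝ → GL(n,ℝ)` with `g(0) = I` and `g′(0) = H`,
the vector `σ⃗(g(t))` of base-2 logarithms of singular values (nonincreasing order) has a
right derivative at `t = 0` equal to `(1/(2 ln 2)) (λ₁(H+Hᵀ), …, λₙ(H+Hᵀ))`, where `λᵢ`
is the `i`-th largest eigenvalue. -/
theorem statement14 {n : ℕ} (g : ℝ → Matrix (Fin n) (Fin n) ℝ)
    (H : Matrix (Fin n) (Fin n) ℝ) (hg : ContDiff ℝ 1 g)
    (hunit : ∀ t, IsUnit (g t)) (h0 : g 0 = 1) (hH : deriv g 0 = H) :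
    HasDerivWithinAt (fun t => sigmaVec (g t))
      (fun i => (1 / (2 * Real.log 2)) * eigsDesc (H + Hᵀ) i) (Set.Ici (0:ℝ)) 0 := by
  classical
  set B := H + Hᵀ with hB
  have hBherm : B.IsHermitian := by
    show Bᴴ = B
    rw [hB, Matrix.conjTranspose_eq_transpose_of_trivial, Matrix.transpose_add,
      Matrix.transpose_transpose, add_comm]
  set A : ℝ → Matrix (Fin n) (Fin n) ℝ := fun t => (g t)ᵀ * g t with hAdef
  have hA0 : A 0 = 1 := by rw [hAdef]; simp [h0]
  have hgd : HasDerivAt g H 0 := by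
    have h1 : DifferentiableAt ℝ g 0 := (hg.differentiable one_ne_zero).differentiableAt
    have h2 := h1.hasDerivAt
    rw [← hH]
    exact h2
  have hge : ∀ k i : Fin n, HasDerivAt (fun t => g t k i) (H k i) 0 := by
    intro k i
    have h1 : HasDerivAt (fun t => g t k) (H k) 0 := hasDerivAt_pi.mp hgd k
    exact hasDerivAt_pi.mp h1 i
  have hAd : HasDerivAt A B 0 := by
    apply hasDerivAt_pi.mpr
    intro i
    rw [hasDerivAt_pi]
    intro j
    have heq : (fun t => A t i j) = fun t => ∑ k, g t k i * g t k j := by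
      funext t; simp [hAdef, Matrix.mul_apply, Matrix.transpose_apply]
    have hsum : HasDerivAt (fun t => ∑ k, g t k i * g t k j)
        (∑ k, (H k i * g 0 k j + g 0 k i * H k j)) 0 :=
      HasDerivAt.fun_sum (fun k _ => (hge k i).mul (hge k j))
    have hval : (∑ k, (H k i * g 0 k j + g 0 k i * H k j)) = B i j := by
      rw [h0, hB]
      rw [Finset.sum_add_distrib]
      have e1 : ∑ k, H k i * (1 : Matrix (Fin n) (Fin n) ℝ) k j = H j i := by
        simp [Matrix.one_apply]
      have e2 : ∑ k, (1 : Matrix (Fin n) (Fin n) ℝ) k i * H k j = H i j := by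
        simp [Matrix.one_apply]
      rw [e1, e2, Matrix.add_apply, Matrix.transpose_apply]
      ring
    rw [show (fun t => A t i j) = fun t => ∑ k, g t k i * g t k j from heq, ← hval]
    exact hsum
  have hlo : (fun t => A t - A 0 - (t - 0) • B)
      =o[nhdsWithin 0 (Set.Ici 0)] (fun t : ℝ => t - 0) :=
    (hasDerivAt_iff_isLittleO.mp hAd).mono nhdsWithin_le_nhds
  rw [hasDerivWithinAt_pi]
  intro i
  set β : Fin n → ℝ := eigsDesc B with hβ
  have hψ0 : eigsDesc (A 0) i = (1:ℝ) := by
    rw [hA0]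
    have := congrFun (eigsDesc_one_add_smul hBherm (le_refl (0:ℝ))) i
    simpa using this
  have hψ : HasDerivWithinAt (fun t => eigsDesc (A t) i) (β i) (Set.Ici 0) 0 := by
    rw [hasDerivWithinAt_iff_isLittleO]
    have hbig : (fun t => eigsDesc (A t) i - eigsDesc (A 0) i - (t - 0) • β i)
        =O[nhdsWithin 0 (Set.Ici 0)] (fun t => A t - A 0 - (t - 0) • B) := by
      apply Asymptotics.IsBigO.of_bound ((n:ℝ)^2)
      filter_upwards [self_mem_nhdsWithin] with t ht
      have ht' : (0:ℝ) ≤ t := ht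
      have h2 : eigsDesc (1 + t • B) i = 1 + t * β i :=
        congrFun (eigsDesc_one_add_smul hBherm ht') i
      have h3 : A t - A 0 - (t - 0) • B = A t - (1 + t • B) := by
        rw [hA0]
        rw [sub_zero]
        abel
      have h4 := weyl_abs (herm_tmul (g t)) (herm_one_add_smul t hBherm) i
      have h5 : eigsDesc (A t) i - eigsDesc (A 0) i - (t - 0) • β i
          = eigsDesc (A t) i - eigsDesc (1 + t • B) i := by
        rw [hψ0, h2, smul_eq_mul]
        ring
      rw [Real.norm_eq_abs, h5, h3]
      exact h4
    exact hbig.trans_isLittleO hlo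
  have hpos : ∀ t, 0 < eigsDesc (A t) i := fun t => eigsDesc_pos_of_unit (hunit t) i
  have hfun : (fun t => sigmaVec (g t) i)
      = fun t => (1 / (2 * Real.log 2)) * Real.log (eigsDesc (A t) i) := by
    funext t
    have hp := hpos t
    simp only [sigmaVec, svals]
    rw [Real.logb, Real.log_sqrt (le_of_lt hp)]
    ring
  show HasDerivWithinAt (fun t => sigmaVec (g t) i)
      ((1 / (2 * Real.log 2)) * eigsDesc (H + Hᵀ) i) (Set.Ici 0) 0
  rw [hfun]
  have hlog : HasDerivWithinAt (fun t => Real.log (eigsDesc (A t) i)) (β i) (Set.Ici 0) 0 := by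
    have hld : HasDerivAt Real.log 1 (eigsDesc (A 0) i) := by
      rw [hψ0]
      simpa using Real.hasDerivAt_log one_ne_zero
    have hcomp := hld.comp_hasDerivWithinAt 0 hψ
    rw [one_mul] at hcomp
    exact hcomp
  have := hlog.const_mul (1 / (2 * Real.log 2))
  simpa [hβ, hB] using this

end
end

section
/- Consider the Lanford system ẋ = (a−1)x − y + xz, ẏ = x + (a−1)y + yz, ż = az − (x² + y² + z²) with parameter a > 0, and the matrix function P(x,y,z) = diag(1,1,1/2)·exp(2z/a). The three roots λ of det[2(P Dφ)^{sym} + Ṗ − λP] = 0 (with Ṗ the orbital derivative of P along the flow) satisfy λ₁ = 2(a−2z) + (2/a)(az − z² − x² − y²) and λ₂ = λ₃ = 2(a−1+z) + (2/a)(az − z² − x² − y²); moreover on any region with z ≥ 0 one has λ₁ ≤ 2a, λ₂ = λ₃ ≤ 2(2a−1), and λ₁ + 2λ₂ ≤ (15/2)a − 4 for all (x,y,z) ∈ ℝ³. -/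
open Matrix

noncomputable section

variable {n : ℕ}

set_option maxHeartbeats 1000000

/-- For the Lanford system with parameter `a > 0` and the metric
`P = diag(1,1,1/2)·exp(2z/a)`, the roots of `det[2(P Dφ)^{sym} + Ṗ − λP] = 0` are
`λ₁ = 2(a−2z) + (2/a)(az−z²−x²−y²)` (simple) and
`λ₂ = λ₃ = 2(a−1+z) + (2/a)(az−z²−x²−y²)` (double); moreover if `z ≥ 0` then
`λ₁ ≤ 2a` and `λ₂ ≤ 2(2a−1)`, and `λ₁ + 2λ₂ ≤ (15/2)a − 4` for all `(x,y,z) ∈ ℝ³`. -/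
theorem statement19 (a : ℝ) (ha : 0 < a) (x y z : ℝ)
    (Dφ P Pdot : Matrix (Fin 3) (Fin 3) ℝ) (l1 l2 : ℝ)
    (hDφ : Dφ = !![a - 1 + z, -1, x; 1, a - 1 + z, y; -2*x, -2*y, a - 2*z])
    (hP : P = Real.exp (2 * z / a) • !![1, 0, 0; 0, 1, 0; 0, 0, 1/2])
    (hPdot : Pdot = ((2 / a) * (a * z - x^2 - y^2 - z^2)) • P)
    (hl1 : l1 = 2 * (a - 2*z) + (2 / a) * (a * z - z^2 - x^2 - y^2))
    (hl2 : l2 = 2 * (a - 1 + z) + (2 / a) * (a * z - z^2 - x^2 - y^2)) :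
    (∀ lam : ℝ,
        (P * Dφ + (P * Dφ)ᵀ + Pdot - lam • P).det
          = Real.exp (2 * z / a) ^ 3 * (1/2) * (l1 - lam) * (l2 - lam) ^ 2) ∧
    (0 ≤ z → l1 ≤ 2 * a ∧ l2 ≤ 2 * (2 * a - 1)) ∧
    l1 + 2 * l2 ≤ (15/2) * a - 4 := by
  have ha' : a ≠ 0 := ne_of_gt ha
  have hexp : (2/a)*(a*z - z^2 - x^2 - y^2) = 2*z - (2/a)*z^2 - (2/a)*(x^2+y^2) := by
    field_simp; ring
  have h1 : 0 ≤ (2/a)*(x^2+y^2) := by positivity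
  refine ⟨?_, ?_, ?_⟩
  · intro lam
    subst hDφ hP hPdot hl1 hl2
    generalize Real.exp (2 * z / a) = e
    have hM : (e • !![(1:ℝ), 0, 0; 0, 1, 0; 0, 0, 1/2] * !![a - 1 + z, -1, x; 1, a - 1 + z, y; -2*x, -2*y, a - 2*z] + (e • !![(1:ℝ), 0, 0; 0, 1, 0; 0, 0, 1/2] * !![a - 1 + z, -1, x; 1, a - 1 + z, y; -2*x, -2*y, a - 2*z])ᵀ + ((2 / a) * (a * z - x^2 - y^2 - z^2)) • (e • !![(1:ℝ), 0, 0; 0, 1, 0; 0, 0, 1/2]) - lam • (e • !![(1:ℝ), 0, 0; 0, 1, 0; 0, 0, 1/2])) =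
        e • !![2*(a-1+z) + (2/a)*(a*z - z^2 - x^2 - y^2) - lam, 0, 0;
               0, 2*(a-1+z) + (2/a)*(a*z - z^2 - x^2 - y^2) - lam, 0;
               0, 0, (1/2)*(2*(a - 2*z) + (2/a)*(a*z - z^2 - x^2 - y^2) - lam)] := by
      ext i j
      fin_cases i <;> fin_cases j <;>
        simp [Matrix.mul_apply, Fin.sum_univ_three, Matrix.vecHead, Matrix.vecTail] <;> ring
    rw [hM, Matrix.det_smul, Matrix.det_fin_three]
    simp [Matrix.vecHead, Matrix.vecTail]
    ring
  · intro hz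
    constructor
    · rw [hl1, hexp]
      have h2 : 0 ≤ (2/a)*z^2 := by positivity
      linarith
    · rw [hl2, hexp]
      have keyeq : (2/a)*(a-z)^2 = 2*a - 4*z + (2/a)*z^2 := by field_simp; ring
      have keypos : 0 ≤ (2/a)*(a-z)^2 := by positivity
      linarith
  · rw [hl1, hl2, hexp]
    have keyeq : (3/(2*a))*(a-2*z)^2 = (3/2)*a - 6*z + 3*((2/a)*z^2) := by field_simp; ring
    have keypos : 0 ≤ (3/(2*a))*(a-2*z)^2 := by positivity
    linarith

end
end
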